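/- arXiv:0905.3327 — 6 statements merged into one kernel-verified Lean document; each statement's English description precedes it below -/
import Mathlib

section
/- For any odd prime p and any integers a, b > 0, the congruence H(−a, −b; p−1) ≡ −(1 − 1/2^{a+b−1})·H(a, b; p−1) − ((−1)^b / 2^{a+b−1})·H(a; (p−1)/2)·H(b; (p−1)/2) (mod p) holds. -/
open Finset

/-- Auxiliary sum for alternating multiple harmonic sums: the indices attached to the
list entries range (strictly increasingly) in the interval `[m, n]`. -/
def Haux : List ℤ → ℕ → ℕ → ℚ
  | [], _, _ => 1
  | a :: as, m, n =>
      ∑ k ∈ Finset.Icc m n, ((Int.sign a : ℚ) ^ k / (k : ℚ) ^ a.natAbs) * Haux as (k + 1) n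

/-- The alternating multiple harmonic sum
`H(a₁,…,a_r; n) = ∑_{1 ≤ k₁ < ⋯ < k_r ≤ n} ∏ᵢ sign(aᵢ)^{kᵢ} / kᵢ^{|aᵢ|}`. -/
def H (as : List ℤ) (n : ℕ) : ℚ := Haux as 1 n

/-- `x ≡ y (mod p^k)` for rationals: the `p`-adic valuation of `x - y` is at least `k`,
expressed via the `p`-adic norm. -/
def Rcong (p k : ℕ) (x y : ℚ) : Prop := padicNorm p (x - y) ≤ (p : ℚ) ^ (-(k : ℤ))

/-- The Fermat quotient `q_p(2) = (2^(p-1) - 1)/p` as a rational number. -/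
def fq (p : ℕ) : ℚ := (2 ^ (p - 1) - 1 : ℚ) / p

def RelQ (p : ℕ) (q : ℚ) (c : ZMod p) : Prop :=
  ∃ x y : ℤ, ¬ (p : ℤ) ∣ y ∧ q * y = x ∧ (x : ZMod p) = c * y

section RelLemmas

variable {p : ℕ} [hpf : Fact p.Prime]
include hpf

theorem rel_intCast (n : ℤ) : RelQ p (n : ℚ) (n : ZMod p) := by
  refine ⟨n, 1, ?_, by push_cast; ring, by push_cast; ring⟩
  intro h
  have h2 := (Fact.out : p.Prime).two_le
  have := Int.le_of_dvd one_pos h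
  omega

theorem rel_add {q r : ℚ} {c d : ZMod p} (h1 : RelQ p q c) (h2 : RelQ p r d) :
    RelQ p (q + r) (c + d) := by
  obtain ⟨x1, y1, hy1, hq1, hc1⟩ := h1
  obtain ⟨x2, y2, hy2, hq2, hc2⟩ := h2
  refine ⟨x1 * y2 + x2 * y1, y1 * y2, ?_, ?_, ?_⟩
  · intro h
    rcases ((Nat.prime_iff_prime_int.mp Fact.out).dvd_mul.mp h) with h | h
    exacts [hy1 h, hy2 h]
  · push_cast
    linear_combination (y2 : ℚ) * hq1 + (y1 : ℚ) * hq2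
  · push_cast
    linear_combination (y2 : ZMod p) * hc1 + (y1 : ZMod p) * hc2

theorem rel_mul {q r : ℚ} {c d : ZMod p} (h1 : RelQ p q c) (h2 : RelQ p r d) :
    RelQ p (q * r) (c * d) := by
  obtain ⟨x1, y1, hy1, hq1, hc1⟩ := h1
  obtain ⟨x2, y2, hy2, hq2, hc2⟩ := h2
  refine ⟨x1 * x2, y1 * y2, ?_, ?_, ?_⟩
  · intro h
    rcases ((Nat.prime_iff_prime_int.mp Fact.out).dvd_mul.mp h) with h | h
    exacts [hy1 h, hy2 h]
  · push_cast
    linear_combination (r * (y2 : ℚ)) * hq1 + (x1 : ℚ) * hq2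
  · push_cast
    linear_combination ((d : ZMod p) * (y2 : ZMod p)) * hc1 + (x1 : ZMod p) * hc2

theorem rel_one : RelQ p (1 : ℚ) (1 : ZMod p) := by
  simpa using rel_intCast (p := p) 1

theorem rel_zero : RelQ p (0 : ℚ) (0 : ZMod p) := by
  simpa using rel_intCast (p := p) 0

theorem rel_neg {q : ℚ} {c : ZMod p} (h : RelQ p q c) : RelQ p (-q) (-c) := by
  have := rel_mul (rel_intCast (-1)) h
  simpa using this

theorem rel_sub {q r : ℚ} {c d : ZMod p} (h1 : RelQ p q c) (h2 : RelQ p r d) :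
    RelQ p (q - r) (c - d) := by
  have := rel_add h1 (rel_neg h2)
  simpa [sub_eq_add_neg] using this

theorem rel_pow {q : ℚ} {c : ZMod p} (h : RelQ p q c) (n : ℕ) : RelQ p (q ^ n) (c ^ n) := by
  induction n with
  | zero => simpa using rel_one
  | succ k ih =>
    rw [pow_succ, pow_succ]
    exact rel_mul ih h

theorem rel_sum {α : Type*} {s : Finset α} {f : α → ℚ} {g : α → ZMod p}
    (h : ∀ i ∈ s, RelQ p (f i) (g i)) :
    RelQ p (∑ i ∈ s, f i) (∑ i ∈ s, g i) := by
  classical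
  induction s using Finset.cons_induction with
  | empty => simpa using rel_zero
  | cons a s ha ih =>
    rw [Finset.sum_cons, Finset.sum_cons]
    exact rel_add (h a (Finset.mem_cons_self a s)) (ih fun i hi => h i (Finset.mem_cons.mpr (Or.inr hi)))

theorem rel_inv {k : ℕ} (hk : ¬ p ∣ k) : RelQ p ((k : ℚ))⁻¹ (((k : ZMod p))⁻¹) := by
  have hk0 : k ≠ 0 := by rintro rfl; exact hk (dvd_zero p)
  have hkQ : (k : ℚ) ≠ 0 := Nat.cast_ne_zero.mpr hk0
  have hkF : (k : ZMod p) ≠ 0 := by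
    rw [Ne, ZMod.natCast_eq_zero_iff]
    exact hk
  refine ⟨1, (k : ℤ), ?_, ?_, ?_⟩
  · intro h
    exact hk (by exact_mod_cast h)
  · push_cast
    exact inv_mul_cancel₀ hkQ
  · push_cast
    exact (inv_mul_cancel₀ hkF).symm

theorem rel_padicNorm {q : ℚ} (h : RelQ p q 0) :
    padicNorm p q ≤ (p : ℚ) ^ (-1 : ℤ) := by
  obtain ⟨x, y, hy, hq, hc⟩ := h
  rw [zero_mul] at hc
  have hdvd : (p : ℤ) ∣ x := (ZMod.intCast_zmod_eq_zero_iff_dvd x p).mp hc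
  rcases eq_or_ne q 0 with rfl | h0
  · rw [padicNorm.zero]
    have : (0:ℚ) < (p:ℚ) ^ (-1:ℤ) := by
      apply zpow_pos
      exact_mod_cast hpf.out.pos
    exact this.le
  · have hy0 : (y : ℚ) ≠ 0 := by
      intro hh
      exact hy (by simpa using (Int.cast_eq_zero.mp hh ▸ dvd_zero (p:ℤ) : (p:ℤ) ∣ y))
    have hxq : q = (x : ℚ) / (y : ℚ) := by
      field_simp
      linarith [hq]
    rw [hxq, padicNorm.div, (padicNorm.int_eq_one_iff y).mpr hy, div_one]
    have := (padicNorm.dvd_iff_norm_le (p := p) (n := 1) (z := x)).mp (by simpa using hdvd)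
    simpa using this

end RelLemmas

section Intervals

variable {M : Type*} [AddCommMonoid M]

theorem Icc_one_eq_Ioc (n : ℕ) : Finset.Icc 1 n = Finset.Ioc 0 n := by
  ext x; simp [Finset.mem_Icc, Finset.mem_Ioc]; omega

theorem Icc_succ_eq_Ioc (a n : ℕ) : Finset.Icc (a + 1) n = Finset.Ioc a n := by
  ext x; simp [Finset.mem_Icc, Finset.mem_Ioc]

theorem sum_parity (g : ℕ → M) {t m : ℕ} (h : t ≤ m) :
    ∑ k ∈ Ioc (2 * t) (2 * m), g k
      = ∑ u ∈ Ioc t m, g (2 * u) + ∑ s ∈ Ico t m, g (2 * s + 1) := by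
  induction m, h using Nat.le_induction with
  | base => simp
  | succ n hn ih =>
    have h1 : 2 * (n + 1) = (2 * n + 1) + 1 := by ring
    rw [h1, Finset.sum_Ioc_succ_top (by omega), Finset.sum_Ioc_succ_top (by omega),
      Finset.sum_Ioc_succ_top hn, Finset.sum_Ico_succ_top hn, ih]
    have h2 : 2 * n + 1 + 1 = 2 * (n + 1) := by ring
    rw [h2]
    abel

theorem sum_parity0 (g : ℕ → M) (m : ℕ) :
    ∑ k ∈ Ioc 0 (2 * m), g k
      = ∑ u ∈ Ioc 0 m, g (2 * u) + ∑ s ∈ range m, g (2 * s + 1) := by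
  have h := sum_parity g (Nat.zero_le m)
  rw [Nat.mul_zero] at h
  rw [h, Finset.range_eq_Ico]

theorem sum_parity_odd {F : Type*} [AddCommGroup F] (g : ℕ → F) {s m : ℕ} (h : s < m) :
    ∑ k ∈ Ioc (2 * s + 1) (2 * m), g k
      = ∑ u ∈ Ioc s m, g (2 * u) + ∑ u ∈ Ico (s + 1) m, g (2 * u + 1) := by
  have hbot : ∑ k ∈ Ioc (2 * s) (2 * m), g k
      = g (2 * s + 1) + ∑ k ∈ Ioc (2 * s + 1) (2 * m), g k := by
    rw [← Finset.sum_Ioc_consecutive g (show 2 * s ≤ 2 * s + 1 by omega) (by omega),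
      Nat.Ioc_succ_singleton, Finset.sum_singleton]
  have hsplit := sum_parity g h.le
  have hico : ∑ u ∈ Ico s m, g (2 * u + 1)
      = g (2 * s + 1) + ∑ u ∈ Ico (s + 1) m, g (2 * u + 1) :=
    Finset.sum_eq_sum_Ico_succ_bot h _
  have := hbot.symm.trans hsplit
  rw [hico] at this
  have h2 : g (2 * s + 1) + ∑ k ∈ Ioc (2 * s + 1) (2 * m), g k
      = g (2 * s + 1) + (∑ u ∈ Ioc s m, g (2 * u) + ∑ u ∈ Ico (s + 1) m, g (2 * u + 1)) := by
    rw [this]; abel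
  exact add_left_cancel h2

end Intervals

section Reindex

variable {M : Type*} [AddCommMonoid M]

theorem sum_rev (h : ℕ → M) (a b : ℕ) :
    ∑ u ∈ Ico a b, h (b - u) = ∑ w ∈ Ioc 0 (b - a), h w := by
  refine Finset.sum_nbij' (fun u => b - u) (fun w => b - w) ?_ ?_ ?_ ?_ ?_
  · intro u hu; simp only [Finset.mem_Ico] at hu; simp only [Finset.mem_Ioc]; omega
  · intro w hw; simp only [Finset.mem_Ioc] at hw; simp only [Finset.mem_Ico]; omega
  · intro u hu; simp only [Finset.mem_Ico] at hu; show b - (b - u) = u; omega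
  · intro w hw; simp only [Finset.mem_Ioc] at hw; show b - (b - w) = w; omega
  · intro u hu; rfl

theorem sum_refl (h : ℕ → M) (a b : ℕ) :
    ∑ k ∈ Ioc a b, h k = ∑ w ∈ Ioc 0 (b - a), h (b + 1 - w) := by
  refine Finset.sum_nbij' (fun k => b + 1 - k) (fun w => b + 1 - w) ?_ ?_ ?_ ?_ ?_
  · intro k hk; simp only [Finset.mem_Ioc] at hk ⊢; omega
  · intro w hw; simp only [Finset.mem_Ioc] at hw ⊢; omega
  · intro k hk; simp only [Finset.mem_Ioc] at hk; show b + 1 - (b + 1 - k) = k; omega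
  · intro w hw; simp only [Finset.mem_Ioc] at hw; show b + 1 - (b + 1 - w) = w; omega
  · intro k hk; simp only [Finset.mem_Ioc] at hk
    show h k = h (b + 1 - (b + 1 - k))
    congr 1; omega

end Reindex

section ZSide

def FaZ (p e n : ℕ) : ZMod p := ∑ k ∈ Ioc 0 n, ((k : ZMod p))⁻¹ ^ e

def DDZ (p a b m : ℕ) : ZMod p :=
  ∑ j ∈ Ioc 0 m, ((j : ZMod p))⁻¹ ^ a * ∑ k ∈ Ioc j m, ((k : ZMod p))⁻¹ ^ b

def DDZ' (p a b m : ℕ) : ZMod p :=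
  ∑ u ∈ Ioc 0 m, ((u : ZMod p))⁻¹ ^ a * ∑ v ∈ Ioc 0 (u - 1), ((v : ZMod p))⁻¹ ^ b

def Z2 (p : ℕ) (ε : ZMod p) (a b n : ℕ) : ZMod p :=
  ∑ j ∈ Ioc 0 n, ε ^ j * ((j : ZMod p))⁻¹ ^ a * ∑ k ∈ Ioc j n, ε ^ k * ((k : ZMod p))⁻¹ ^ b

def AEE (p a b m : ℕ) : ZMod p :=
  ∑ t ∈ Ioc 0 m, ((2 * t : ℕ) : ZMod p)⁻¹ ^ a * ∑ u ∈ Ioc t m, ((2 * u : ℕ) : ZMod p)⁻¹ ^ b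

def AEO (p a b m : ℕ) : ZMod p :=
  ∑ t ∈ Ioc 0 m, ((2 * t : ℕ) : ZMod p)⁻¹ ^ a * ∑ s ∈ Ico t m, ((2 * s + 1 : ℕ) : ZMod p)⁻¹ ^ b

def AOE (p a b m : ℕ) : ZMod p :=
  ∑ s ∈ range m, ((2 * s + 1 : ℕ) : ZMod p)⁻¹ ^ a * ∑ u ∈ Ioc s m, ((2 * u : ℕ) : ZMod p)⁻¹ ^ b

def AOO (p a b m : ℕ) : ZMod p :=
  ∑ s ∈ range m, ((2 * s + 1 : ℕ) : ZMod p)⁻¹ ^ a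
    * ∑ u ∈ Ico (s + 1) m, ((2 * u + 1 : ℕ) : ZMod p)⁻¹ ^ b

variable {p m a b : ℕ}

theorem Z2_parity {ε : ZMod p} (hε : ε * ε = 1) (a b m : ℕ) :
    Z2 p ε a b (2 * m) = AEE p a b m + ε * (AEO p a b m + AOE p a b m) + AOO p a b m := by
  have hε2 : ∀ u : ℕ, ε ^ (2 * u) = 1 := by
    intro u
    rw [pow_mul, show ε ^ 2 = 1 by rw [sq]; exact hε, one_pow]
  have hε1 : ∀ u : ℕ, ε ^ (2 * u + 1) = ε := by
    intro u
    rw [pow_succ, hε2, one_mul]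
  have heven : (∑ t ∈ Ioc 0 m, (ε ^ (2 * t) * ((2 * t : ℕ) : ZMod p)⁻¹ ^ a
        * ∑ k ∈ Ioc (2 * t) (2 * m), ε ^ k * ((k : ZMod p))⁻¹ ^ b))
      = AEE p a b m + ε * AEO p a b m := by
    rw [AEE, AEO, Finset.mul_sum, ← Finset.sum_add_distrib]
    refine Finset.sum_congr rfl fun t ht => ?_
    rw [Finset.mem_Ioc] at ht
    rw [sum_parity (fun k => ε ^ k * ((k : ZMod p))⁻¹ ^ b) ht.2]
    simp only [hε2, hε1, one_mul]
    rw [show (∑ s ∈ Ico t m, ε * ((2 * s + 1 : ℕ) : ZMod p)⁻¹ ^ b)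
        = ε * ∑ s ∈ Ico t m, ((2 * s + 1 : ℕ) : ZMod p)⁻¹ ^ b from (Finset.mul_sum _ _ _).symm]
    ring
  have hodd : (∑ s ∈ range m, (ε ^ (2 * s + 1) * ((2 * s + 1 : ℕ) : ZMod p)⁻¹ ^ a
        * ∑ k ∈ Ioc (2 * s + 1) (2 * m), ε ^ k * ((k : ZMod p))⁻¹ ^ b))
      = ε * AOE p a b m + AOO p a b m := by
    rw [AOE, AOO, Finset.mul_sum, ← Finset.sum_add_distrib]
    refine Finset.sum_congr rfl fun s hs => ?_
    rw [Finset.mem_range] at hs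
    rw [sum_parity_odd (fun k => ε ^ k * ((k : ZMod p))⁻¹ ^ b) hs]
    simp only [hε2, hε1, one_mul]
    rw [show (∑ u ∈ Ico (s + 1) m, ε * ((2 * u + 1 : ℕ) : ZMod p)⁻¹ ^ b)
        = ε * ∑ u ∈ Ico (s + 1) m, ((2 * u + 1 : ℕ) : ZMod p)⁻¹ ^ b from (Finset.mul_sum _ _ _).symm]
    linear_combination (((2 * s + 1 : ℕ) : ZMod p)⁻¹ ^ a
      * ∑ u ∈ Ico (s + 1) m, ((2 * u + 1 : ℕ) : ZMod p)⁻¹ ^ b) * hε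
  have hsplit : Z2 p ε a b (2 * m)
      = (∑ t ∈ Ioc 0 m, (ε ^ (2 * t) * ((2 * t : ℕ) : ZMod p)⁻¹ ^ a
          * ∑ k ∈ Ioc (2 * t) (2 * m), ε ^ k * ((k : ZMod p))⁻¹ ^ b))
        + ∑ s ∈ range m, (ε ^ (2 * s + 1) * ((2 * s + 1 : ℕ) : ZMod p)⁻¹ ^ a
          * ∑ k ∈ Ioc (2 * s + 1) (2 * m), ε ^ k * ((k : ZMod p))⁻¹ ^ b) := by
    rw [Z2]
    exact sum_parity0 (fun j => ε ^ j * ((j : ZMod p))⁻¹ ^ a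
      * ∑ k ∈ Ioc j (2 * m), ε ^ k * ((k : ZMod p))⁻¹ ^ b) m
  rw [hsplit, heven, hodd]
  ring

end ZSide

section ZSide2

variable {p m a b : ℕ} [Fact p.Prime]

theorem cast_refl (hpm : p = 2 * m + 1) {w : ℕ} (hw : w ≤ 2 * m + 1) :
    ((2 * m + 1 - w : ℕ) : ZMod p) = -((w : ℕ) : ZMod p) := by
  have h0 : ((2 * m + 1 : ℕ) : ZMod p) = 0 := by
    rw [← hpm]; exact ZMod.natCast_self p
  rw [Nat.cast_sub hw, h0, zero_sub]

theorem AEE_eq : AEE p a b m = (2 : ZMod p)⁻¹ ^ (a + b) * DDZ p a b m := by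
  have h2 : ∀ u : ℕ, ((2 * u : ℕ) : ZMod p)⁻¹ = (2 : ZMod p)⁻¹ * ((u : ℕ) : ZMod p)⁻¹ := by
    intro u; push_cast; rw [mul_inv]
  rw [AEE, DDZ, Finset.mul_sum]
  refine Finset.sum_congr rfl fun t ht => ?_
  rw [show (∑ u ∈ Ioc t m, ((2 * u : ℕ) : ZMod p)⁻¹ ^ b)
      = (2 : ZMod p)⁻¹ ^ b * ∑ u ∈ Ioc t m, ((u : ℕ) : ZMod p)⁻¹ ^ b by
    rw [Finset.mul_sum]
    exact Finset.sum_congr rfl fun u hu => by rw [h2, mul_pow]]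
  rw [h2, mul_pow, pow_add]
  ring

theorem AOO_eq (hpm : p = 2 * m + 1) :
    AOO p a b m = (-1 : ZMod p) ^ (a + b) * (2 : ZMod p)⁻¹ ^ (a + b) * DDZ' p a b m := by
  have hodd : ∀ s, s < m → ((2 * s + 1 : ℕ) : ZMod p)⁻¹
      = -((2 : ZMod p)⁻¹ * ((m - s : ℕ) : ZMod p)⁻¹) := by
    intro s hs
    have hsum : (2 * s + 1) + 2 * (m - s) = p := by omega
    have h0 : ((2 * s + 1 : ℕ) : ZMod p) = -((2 * (m - s) : ℕ) : ZMod p) := by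
      refine eq_neg_of_add_eq_zero_left ?_
      rw [← Nat.cast_add, hsum]
      exact ZMod.natCast_self p
    rw [h0, inv_neg]
    congr 1
    push_cast
    rw [mul_inv]
  rw [AOO, DDZ']
  calc ∑ s ∈ range m, ((2 * s + 1 : ℕ) : ZMod p)⁻¹ ^ a
        * ∑ u ∈ Ico (s + 1) m, ((2 * u + 1 : ℕ) : ZMod p)⁻¹ ^ b
      = ∑ s ∈ range m, ((-1 : ZMod p) ^ (a + b) * (2 : ZMod p)⁻¹ ^ (a + b))
        * (((m - s : ℕ) : ZMod p)⁻¹ ^ a * ∑ w ∈ Ioc 0 (m - s - 1), ((w : ℕ) : ZMod p)⁻¹ ^ b) := by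
        refine Finset.sum_congr rfl fun s hs => ?_
        rw [Finset.mem_range] at hs
        have hinner : (∑ u ∈ Ico (s + 1) m, ((2 * u + 1 : ℕ) : ZMod p)⁻¹ ^ b)
            = (-1 : ZMod p) ^ b * (2 : ZMod p)⁻¹ ^ b
              * ∑ w ∈ Ioc 0 (m - s - 1), ((w : ℕ) : ZMod p)⁻¹ ^ b := by
          calc ∑ u ∈ Ico (s + 1) m, ((2 * u + 1 : ℕ) : ZMod p)⁻¹ ^ b
              = ∑ u ∈ Ico (s + 1) m, ((-1 : ZMod p) ^ b * (2 : ZMod p)⁻¹ ^ b)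
                  * ((m - u : ℕ) : ZMod p)⁻¹ ^ b := by
                refine Finset.sum_congr rfl fun u hu => ?_
                rw [Finset.mem_Ico] at hu
                rw [hodd u hu.2, neg_pow, mul_pow]
                ring
            _ = ((-1 : ZMod p) ^ b * (2 : ZMod p)⁻¹ ^ b)
                  * ∑ u ∈ Ico (s + 1) m, ((m - u : ℕ) : ZMod p)⁻¹ ^ b :=
                (Finset.mul_sum _ _ _).symm
            _ = ((-1 : ZMod p) ^ b * (2 : ZMod p)⁻¹ ^ b)
                  * ∑ w ∈ Ioc 0 (m - s - 1), ((w : ℕ) : ZMod p)⁻¹ ^ b := by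
                rw [sum_rev (fun w => ((w : ℕ) : ZMod p)⁻¹ ^ b) (s + 1) m,
                  (by omega : m - (s + 1) = m - s - 1)]
        rw [hinner, hodd s hs, neg_pow, mul_pow]
        ring
    _ = ((-1 : ZMod p) ^ (a + b) * (2 : ZMod p)⁻¹ ^ (a + b))
        * ∑ s ∈ range m, (((m - s : ℕ) : ZMod p)⁻¹ ^ a
            * ∑ w ∈ Ioc 0 (m - s - 1), ((w : ℕ) : ZMod p)⁻¹ ^ b) :=
        (Finset.mul_sum _ _ _).symm
    _ = (-1 : ZMod p) ^ (a + b) * (2 : ZMod p)⁻¹ ^ (a + b)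
        * ∑ u ∈ Ioc 0 m, (((u : ℕ) : ZMod p)⁻¹ ^ a
            * ∑ v ∈ Ioc 0 (u - 1), ((v : ℕ) : ZMod p)⁻¹ ^ b) := by
        rw [Finset.range_eq_Ico,
          sum_rev (fun v => ((v : ℕ) : ZMod p)⁻¹ ^ a
            * ∑ w ∈ Ioc 0 (v - 1), ((w : ℕ) : ZMod p)⁻¹ ^ b) 0 m, Nat.sub_zero]

end ZSide2

section ZSide3

variable {p m a b : ℕ} [Fact p.Prime]

theorem Z2_one (hpm : p = 2 * m + 1) :
    Z2 p 1 a b (2 * m) = DDZ p a b m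
      + (-1 : ZMod p) ^ b * (FaZ p a m * FaZ p b m)
      + (-1 : ZMod p) ^ (a + b) * DDZ' p a b m := by
  have h1 : Z2 p 1 a b (2 * m)
      = ∑ j ∈ Ioc 0 (2 * m), ((j : ZMod p))⁻¹ ^ a
        * ∑ k ∈ Ioc j (2 * m), ((k : ZMod p))⁻¹ ^ b := by
    rw [Z2]; simp only [one_pow, one_mul]
  have hHi : (∑ k ∈ Ioc m (2 * m), ((k : ZMod p))⁻¹ ^ b) = (-1 : ZMod p) ^ b * FaZ p b m := by
    rw [sum_refl (fun k => ((k : ZMod p))⁻¹ ^ b) m (2 * m), (by omega : 2 * m - m = m),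
      FaZ, Finset.mul_sum]
    refine Finset.sum_congr rfl fun w hw => ?_
    rw [Finset.mem_Ioc] at hw
    rw [cast_refl hpm (by omega), inv_neg, neg_pow]
  have hlow : (∑ j ∈ Ioc 0 m, ((j : ZMod p))⁻¹ ^ a
        * ∑ k ∈ Ioc j (2 * m), ((k : ZMod p))⁻¹ ^ b)
      = DDZ p a b m + (-1 : ZMod p) ^ b * (FaZ p a m * FaZ p b m) := by
    calc ∑ j ∈ Ioc 0 m, ((j : ZMod p))⁻¹ ^ a * ∑ k ∈ Ioc j (2 * m), ((k : ZMod p))⁻¹ ^ b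
        = ∑ j ∈ Ioc 0 m, (((j : ZMod p))⁻¹ ^ a * ∑ k ∈ Ioc j m, ((k : ZMod p))⁻¹ ^ b
            + ((j : ZMod p))⁻¹ ^ a * ((-1 : ZMod p) ^ b * FaZ p b m)) := by
          refine Finset.sum_congr rfl fun j hj => ?_
          rw [Finset.mem_Ioc] at hj
          rw [← Finset.sum_Ioc_consecutive _ hj.2 (by omega : m ≤ 2 * m), hHi, mul_add]
      _ = DDZ p a b m + (-1 : ZMod p) ^ b * (FaZ p a m * FaZ p b m) := by
          rw [Finset.sum_add_distrib]
          congr 1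
          rw [← Finset.sum_mul]
          simp only [FaZ]
          ring
  have hHH : (∑ j ∈ Ioc m (2 * m), ((j : ZMod p))⁻¹ ^ a
        * ∑ k ∈ Ioc j (2 * m), ((k : ZMod p))⁻¹ ^ b)
      = (-1 : ZMod p) ^ (a + b) * DDZ' p a b m := by
    rw [sum_refl (fun j => ((j : ZMod p))⁻¹ ^ a * ∑ k ∈ Ioc j (2 * m), ((k : ZMod p))⁻¹ ^ b)
      m (2 * m), (by omega : 2 * m - m = m), DDZ', Finset.mul_sum]
    refine Finset.sum_congr rfl fun u hu => ?_
    rw [Finset.mem_Ioc] at hu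
    have hinner : (∑ k ∈ Ioc (2 * m + 1 - u) (2 * m), ((k : ZMod p))⁻¹ ^ b)
        = (-1 : ZMod p) ^ b * ∑ v ∈ Ioc 0 (u - 1), ((v : ZMod p))⁻¹ ^ b := by
      rw [sum_refl (fun k => ((k : ZMod p))⁻¹ ^ b) (2 * m + 1 - u) (2 * m),
        (by omega : 2 * m - (2 * m + 1 - u) = u - 1), Finset.mul_sum]
      refine Finset.sum_congr rfl fun w hw => ?_
      rw [Finset.mem_Ioc] at hw
      rw [cast_refl hpm (by omega), inv_neg, neg_pow]
    rw [hinner, cast_refl hpm (by omega), inv_neg, neg_pow]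
    ring
  rw [h1, ← Finset.sum_Ioc_consecutive _ (Nat.zero_le m) (by omega : m ≤ 2 * m), hlow, hHH]

theorem Zmain (hpm : p = 2 * m + 1) (hp2 : p ≠ 2) (hab : 0 < a + b) :
    Z2 p (-1) a b (2 * m)
      = -(1 - (2 : ZMod p)⁻¹ ^ (a + b - 1)) * Z2 p 1 a b (2 * m)
        - ((-1 : ZMod p) ^ b * (2 : ZMod p)⁻¹ ^ (a + b - 1)) * (FaZ p a m * FaZ p b m) := by
  have h2 : (2 : ZMod p) ≠ 0 := by
    have h2' : ((2 : ℕ) : ZMod p) ≠ 0 := by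
      rw [Ne, ZMod.natCast_eq_zero_iff]
      intro hdvd
      rcases (Nat.dvd_prime Nat.prime_two).mp hdvd with h | h
      · exact (Fact.out : p.Prime).one_lt.ne' h
      · exact hp2 h
    simpa using h2'
  have hP1p := Z2_parity (p := p) (ε := (1 : ZMod p)) (by ring) a b m
  have hP1n := Z2_parity (p := p) (ε := (-1 : ZMod p)) (by ring) a b m
  have hEE := AEE_eq (p := p) (m := m) (a := a) (b := b)
  have hOO := AOO_eq (p := p) (m := m) (a := a) (b := b) hpm
  have hP4 := Z2_one (p := p) (m := m) (a := a) (b := b) hpm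
  have hpow : (2 : ZMod p) * (2 : ZMod p)⁻¹ ^ (a + b) = (2 : ZMod p)⁻¹ ^ (a + b - 1) := by
    obtain ⟨e, he⟩ : ∃ e, a + b = e + 1 := ⟨a + b - 1, by omega⟩
    rw [he, Nat.add_sub_cancel, pow_succ,
      show (2 : ZMod p) * ((2 : ZMod p)⁻¹ ^ e * (2 : ZMod p)⁻¹)
        = (2 * (2 : ZMod p)⁻¹) * (2 : ZMod p)⁻¹ ^ e from by ring,
      mul_inv_cancel₀ h2, one_mul]
  linear_combination hP1n + hP1p + 2 * hEE + 2 * hOO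
    - (2 * (2 : ZMod p)⁻¹ ^ (a + b)) * hP4
    + (Z2 p 1 a b (2 * m) - (-1 : ZMod p) ^ b * (FaZ p a m * FaZ p b m)) * hpow

end ZSide3

section Glue

variable {p : ℕ} [hpf : Fact p.Prime]

theorem H_single_eq {e n : ℕ} (he : 0 < e) :
    H [(e : ℤ)] n = ∑ k ∈ Ioc 0 n, ((k : ℚ))⁻¹ ^ e := by
  rw [H, Haux, Icc_one_eq_Ioc]
  refine Finset.sum_congr rfl fun k hk => ?_
  simp [Haux, Int.sign_natCast_of_ne_zero he.ne', one_div, inv_pow]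

theorem H_pos2_eq {a b n : ℕ} (ha : 0 < a) (hb : 0 < b) :
    H [(a : ℤ), (b : ℤ)] n
      = ∑ j ∈ Ioc 0 n, ((j : ℚ))⁻¹ ^ a * ∑ k ∈ Ioc j n, ((k : ℚ))⁻¹ ^ b := by
  rw [H, Haux, Icc_one_eq_Ioc]
  refine Finset.sum_congr rfl fun j hj => ?_
  rw [Haux, Icc_succ_eq_Ioc]
  simp [Haux, Int.sign_natCast_of_ne_zero ha.ne', Int.sign_natCast_of_ne_zero hb.ne',
    one_div, inv_pow]

theorem H_neg2_eq {a b n : ℕ} (ha : 0 < a) (hb : 0 < b) :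
    H [-(a : ℤ), -(b : ℤ)] n
      = ∑ j ∈ Ioc 0 n, (-1 : ℚ) ^ j * ((j : ℚ))⁻¹ ^ a
          * ∑ k ∈ Ioc j n, (-1 : ℚ) ^ k * ((k : ℚ))⁻¹ ^ b := by
  rw [H, Haux, Icc_one_eq_Ioc]
  refine Finset.sum_congr rfl fun j hj => ?_
  rw [Haux, Icc_succ_eq_Ioc]
  simp [Haux, Int.sign_natCast_of_ne_zero ha.ne', Int.sign_natCast_of_ne_zero hb.ne',
    div_eq_mul_inv, inv_pow, mul_assoc]

theorem not_dvd_of_mem_Ioc {n k : ℕ} (hn : n < p) (hk : k ∈ Ioc 0 n) : ¬ p ∣ k := by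
  rw [Finset.mem_Ioc] at hk
  intro hd
  have := Nat.le_of_dvd (by omega) hd
  omega

theorem rel_neg_one : RelQ p (-1 : ℚ) (-1 : ZMod p) := by
  simpa using rel_intCast (p := p) (-1)

theorem relH_single {e n : ℕ} (he : 0 < e) (hn : n < p) :
    RelQ p (H [(e : ℤ)] n) (FaZ p e n) := by
  rw [H_single_eq he, FaZ]
  exact rel_sum fun k hk => rel_pow (rel_inv (not_dvd_of_mem_Ioc hn hk)) e

theorem relH_pos2 {a b n : ℕ} (ha : 0 < a) (hb : 0 < b) (hn : n < p) :
    RelQ p (H [(a : ℤ), (b : ℤ)] n) (Z2 p 1 a b n) := by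
  rw [H_pos2_eq ha hb]
  have hZ : Z2 p 1 a b n
      = ∑ j ∈ Ioc 0 n, ((j : ZMod p))⁻¹ ^ a * ∑ k ∈ Ioc j n, ((k : ZMod p))⁻¹ ^ b := by
    rw [Z2]; simp only [one_pow, one_mul]
  rw [hZ]
  refine rel_sum fun j hj => rel_mul (rel_pow (rel_inv (not_dvd_of_mem_Ioc hn hj)) a) ?_
  refine rel_sum fun k hk => rel_pow (rel_inv (not_dvd_of_mem_Ioc hn ?_)) b
  rw [Finset.mem_Ioc] at hj hk ⊢
  omega

theorem relH_neg2 {a b n : ℕ} (ha : 0 < a) (hb : 0 < b) (hn : n < p) :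
    RelQ p (H [-(a : ℤ), -(b : ℤ)] n) (Z2 p (-1) a b n) := by
  rw [H_neg2_eq ha hb, Z2]
  refine rel_sum fun j hj => rel_mul (rel_mul (rel_pow rel_neg_one j)
    (rel_pow (rel_inv (not_dvd_of_mem_Ioc hn hj)) a)) ?_
  refine rel_sum fun k hk => rel_mul (rel_pow rel_neg_one k)
    (rel_pow (rel_inv (not_dvd_of_mem_Ioc hn ?_)) b)
  rw [Finset.mem_Ioc] at hj hk ⊢
  omega

end Glue

theorem stmt_3 (p : ℕ) (hp : p.Prime) (hp2 : p ≠ 2) (a b : ℕ) (ha : 0 < a) (hb : 0 < b) :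
    Rcong p 1 (H [-(a : ℤ), -(b : ℤ)] (p - 1))
      (-(1 - 1 / 2 ^ (a + b - 1)) * H [(a : ℤ), (b : ℤ)] (p - 1) -
        ((-1 : ℚ) ^ b / 2 ^ (a + b - 1)) *
          (H [(a : ℤ)] ((p - 1) / 2) * H [(b : ℤ)] ((p - 1) / 2))) := by
  haveI : Fact p.Prime := ⟨hp⟩
  have hodd : p % 2 = 1 := Nat.odd_iff.mp (hp.odd_of_ne_two hp2)
  have hp3 : 3 ≤ p := by
    have := hp.two_le
    omega
  set m := (p - 1) / 2 with hm
  have hpm : p = 2 * m + 1 := by omega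
  have hn : p - 1 = 2 * m := by omega
  have h1 : RelQ p (H [-(a : ℤ), -(b : ℤ)] (p - 1)) (Z2 p (-1) a b (2 * m)) := by
    rw [hn]; exact relH_neg2 ha hb (by omega)
  have h2 : RelQ p (H [(a : ℤ), (b : ℤ)] (p - 1)) (Z2 p 1 a b (2 * m)) := by
    rw [hn]; exact relH_pos2 ha hb (by omega)
  have h3 : RelQ p (H [(a : ℤ)] m) (FaZ p a m) := relH_single ha (by omega)
  have h4 : RelQ p (H [(b : ℤ)] m) (FaZ p b m) := relH_single hb (by omega)
  have hd2 : ¬ p ∣ 2 := by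
    intro hdvd
    rcases (Nat.dvd_prime Nat.prime_two).mp hdvd with h | h
    · exact hp.one_lt.ne' h
    · exact hp2 h
  have hhalf : RelQ p (1 / 2 ^ (a + b - 1) : ℚ) ((2 : ZMod p)⁻¹ ^ (a + b - 1)) := by
    have h := rel_pow (rel_inv (p := p) (k := 2) hd2) (a + b - 1)
    have eq1 : (((2 : ℕ) : ℚ))⁻¹ ^ (a + b - 1) = 1 / 2 ^ (a + b - 1) := by
      push_cast
      rw [inv_pow, one_div]
    have eq2 : (((2 : ℕ) : ZMod p))⁻¹ ^ (a + b - 1) = (2 : ZMod p)⁻¹ ^ (a + b - 1) := by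
      norm_num
    rwa [eq1, eq2] at h
  have hm1 : RelQ p ((-1 : ℚ) ^ b) ((-1 : ZMod p) ^ b) := rel_pow rel_neg_one b
  have hRHS : RelQ p
      (-(1 - 1 / 2 ^ (a + b - 1)) * H [(a : ℤ), (b : ℤ)] (p - 1) -
        ((-1 : ℚ) ^ b / 2 ^ (a + b - 1)) *
          (H [(a : ℤ)] m * H [(b : ℤ)] m))
      (-(1 - (2 : ZMod p)⁻¹ ^ (a + b - 1)) * Z2 p 1 a b (2 * m)
        - ((-1 : ZMod p) ^ b * (2 : ZMod p)⁻¹ ^ (a + b - 1)) * (FaZ p a m * FaZ p b m)) := by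
    rw [show ((-1 : ℚ) ^ b / 2 ^ (a + b - 1)) = (-1 : ℚ) ^ b * (1 / 2 ^ (a + b - 1)) from by
      ring]
    exact rel_sub (rel_mul (rel_neg (rel_sub rel_one hhalf)) h2)
      (rel_mul (rel_mul hm1 hhalf) (rel_mul h3 h4))
  have hdiff := rel_sub h1 hRHS
  rw [Zmain hpm hp2 (by omega), sub_self] at hdiff
  have hfin := rel_padicNorm hdiff
  show padicNorm p _ ≤ _
  simpa using hfin
end

section
/- For any integer a > 1 and any prime p > a + 1, the congruence H(−a; p−1) ≡ −((2^a − 2)/(a·2^{a−1}))·B_{p−a} (mod p) holds. -/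
open Finset

/-! ### Auxiliary lemmas -/

section Aux
open Nat PowerSeries

lemma bps_two_mul : PowerSeries.rescale (2:ℚ) (bernoulliPowerSeries ℚ) * (PowerSeries.exp ℚ + 1)
    = PowerSeries.C (2:ℚ) * bernoulliPowerSeries ℚ := by
  have hexp : PowerSeries.exp ℚ - 1 ≠ 0 := by
    simp only [PowerSeries.exp, PowerSeries.ext_iff, Ne, not_forall]
    use 1
    simp [factorial_ne_zero]
  apply mul_right_cancel₀ hexp
  have h2 : (PowerSeries.exp ℚ + 1) * (PowerSeries.exp ℚ - 1)
      = PowerSeries.rescale (2:ℚ) (PowerSeries.exp ℚ) - 1 := by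
    have := PowerSeries.exp_mul_exp_eq_exp_add (1:ℚ) 1
    rw [PowerSeries.rescale_one] at this
    simp only [RingHom.id_apply] at this
    norm_num at this
    ring_nf
    rw [sq, this]
  calc PowerSeries.rescale (2:ℚ) (bernoulliPowerSeries ℚ) * (PowerSeries.exp ℚ + 1) *
        (PowerSeries.exp ℚ - 1)
      = PowerSeries.rescale (2:ℚ) (bernoulliPowerSeries ℚ) *
        (PowerSeries.rescale (2:ℚ) (PowerSeries.exp ℚ) - 1) := by rw [mul_assoc, h2]
    _ = PowerSeries.rescale (2:ℚ) (bernoulliPowerSeries ℚ * (PowerSeries.exp ℚ - 1)) := by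
        rw [map_mul, map_sub, map_one]
    _ = PowerSeries.rescale (2:ℚ) PowerSeries.X := by rw [bernoulliPowerSeries_mul_exp_sub_one]
    _ = PowerSeries.C (2:ℚ) * PowerSeries.X := by rw [PowerSeries.rescale_X]
    _ = PowerSeries.C (2:ℚ) * (bernoulliPowerSeries ℚ * (PowerSeries.exp ℚ - 1)) := by
        rw [bernoulliPowerSeries_mul_exp_sub_one]
    _ = PowerSeries.C (2:ℚ) * bernoulliPowerSeries ℚ * (PowerSeries.exp ℚ - 1) := by ring

lemma sum_choose_two_pow_bernoulli (n : ℕ) :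
    ∑ i ∈ range (n+1), (n.choose i : ℚ) * 2^i * bernoulli i = (2 - 2^n) * bernoulli n := by
  have h := congrArg (PowerSeries.coeff n) bps_two_mul
  have hres : PowerSeries.rescale (2:ℚ) (bernoulliPowerSeries ℚ)
      = PowerSeries.mk fun i => 2^i * (bernoulli i / i !) := by
    rw [bernoulliPowerSeries, PowerSeries.rescale_mk]
    simp [algebraMap]
  rw [mul_add, map_add, mul_one, hres] at h
  rw [PowerSeries.coeff_mul] at h
  simp only [PowerSeries.coeff_mk, PowerSeries.coeff_exp, PowerSeries.coeff_C_mul,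
    bernoulliPowerSeries, Algebra.algebraMap_self, map_inv₀, map_natCast, RingHom.id_apply,
    one_div] at h
  rw [Nat.sum_antidiagonal_eq_sum_range_succ
    (fun i j => (2:ℚ)^i * (bernoulli i / i !) * ((j ! : ℚ))⁻¹) n] at h
  have hfac : ∀ m : ℕ, (m ! : ℚ) ≠ 0 := fun m => by exact_mod_cast m.factorial_ne_zero
  have key : ∀ x ∈ range (n+1), (n.choose x : ℚ) * 2^x * bernoulli x
      = (n ! : ℚ) * ((2:ℚ)^x * (bernoulli x / x !) * (((n - x)! : ℚ))⁻¹) := by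
    intro x hx
    rw [mem_range, Nat.lt_succ_iff] at hx
    rw [Nat.cast_choose ℚ hx]
    field_simp
  have h2 : ∑ i ∈ range (n+1), (2:ℚ)^i * (bernoulli i / i !) * (((n-i)! : ℚ))⁻¹
      = 2 * (bernoulli n / n !) - 2^n * (bernoulli n / n !) := by
    rw [Nat.succ_eq_add_one] at h; linarith
  rw [Finset.sum_congr rfl key, ← Finset.mul_sum, h2]
  field_simp

variable {p : ℕ} [hp : Fact p.Prime]

lemma pnorm_nat_one {m : ℕ} (h : ¬ p ∣ m) : padicNorm p (m:ℚ) = 1 :=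
  (padicNorm.nat_eq_one_iff m).2 h

lemma pnorm_dvd {z : ℤ} (h : (p:ℤ) ∣ z) : padicNorm p (z:ℚ) ≤ (p:ℚ)⁻¹ := by
  have := (padicNorm.dvd_iff_norm_le (p := p) (n := 1) (z := z)).1 (by simpa using h)
  simpa [zpow_neg, zpow_one] using this

lemma pnorm_mul_le {x y : ℚ} {t : ℚ} (hx : padicNorm p x ≤ 1) (hy : padicNorm p y ≤ t) :
    padicNorm p (x*y) ≤ t := by
  rw [padicNorm.mul]
  calc padicNorm p x * padicNorm p y ≤ 1 * t :=
        mul_le_mul hx hy (padicNorm.nonneg y) zero_le_one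
    _ = t := one_mul t

lemma pnorm_div_one {x y : ℚ} (hy : padicNorm p y = 1) : padicNorm p (x / y) = padicNorm p x := by
  rw [padicNorm.div, hy, div_one]

lemma pnorm_sub_le {x y : ℚ} {t : ℚ} (hx : padicNorm p x ≤ t) (hy : padicNorm p y ≤ t) :
    padicNorm p (x - y) ≤ t := le_trans padicNorm.sub (max_le hx hy)

lemma pnorm_trans {x y z t : ℚ} (hx : padicNorm p (x - y) ≤ t) (hy : padicNorm p (y - z) ≤ t) :
    padicNorm p (x - z) ≤ t := by
  have h : x - z = (x - y) + (y - z) := by ring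
  rw [h]
  exact le_trans padicNorm.nonarchimedean (max_le hx hy)

lemma pnorm_neg_one_pow (k : ℕ) : padicNorm p ((-1:ℚ)^k) ≤ 1 := by
  rcases neg_one_pow_eq_or ℚ k with h | h <;> rw [h] <;>
    simp [padicNorm.one, padicNorm.neg]

lemma sum_pow_range_p_dvd {n : ℕ} (hn2 : n < p - 1) :
    p ∣ ∑ k ∈ range p, k^n := by
  rw [← ZMod.natCast_eq_zero_iff]
  push_cast
  have hb : ∑ k ∈ range p, ((k:ZMod p))^n = ∑ x : ZMod p, x^n := by
    refine Finset.sum_nbij' (i := fun k => ((k : ZMod p))) (j := ZMod.val) ?_ ?_ ?_ ?_ ?_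
    · intro k _; exact mem_univ _
    · intro x _; exact mem_range.2 (ZMod.val_lt x)
    · intro k hk; exact ZMod.val_cast_of_lt (mem_range.1 hk)
    · intro x _; exact ZMod.natCast_zmod_val x
    · intro k _; rfl
  rw [hb]
  exact FiniteField.sum_pow_lt_card_sub_one (K := ZMod p) n (by rwa [ZMod.card])

lemma sum_pow_range_p_norm {n : ℕ} (hn2 : n < p - 1) :
    padicNorm p (∑ k ∈ range p, (k:ℚ)^n) ≤ (p:ℚ)⁻¹ := by
  have h1 : ((∑ k ∈ range p, k^n : ℕ) : ℚ) = ∑ k ∈ range p, (k:ℚ)^n := by push_cast; ring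
  rw [← h1]
  have h2 : ((∑ k ∈ range p, k^n : ℕ) : ℚ) = (((∑ k ∈ range p, k^n : ℕ) : ℤ) : ℚ) := by
    push_cast; ring
  rw [h2]
  exact pnorm_dvd (by exact_mod_cast sum_pow_range_p_dvd hn2)

lemma bernoulli_pnorm_le : ∀ n : ℕ, n ≤ p - 2 → padicNorm p (bernoulli n) ≤ 1 := by
  intro n
  induction n using Nat.strong_induction_on with
  | _ n ih =>
    intro hn
    rcases Nat.eq_zero_or_pos n with rfl | hn1
    · simp [padicNorm.one]
    have hplt : n + 1 < p := by
      have := hp.1.two_le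
      omega
    have F := _root_.sum_range_pow p n
    rw [Finset.sum_range_succ] at F
    have hn1Q : ((n:ℚ) + 1) ≠ 0 := by positivity
    have hlast : bernoulli n * ((n + 1).choose n) * (p:ℚ) ^ (n + 1 - n) / ((n:ℚ) + 1)
        = bernoulli n * p := by
      rw [Nat.choose_succ_self_right, Nat.add_sub_cancel_left]
      push_cast
      field_simp
    have key : bernoulli n * p = (∑ k ∈ range p, (k:ℚ)^n)
        - ∑ i ∈ range n, bernoulli i * ((n + 1).choose i) * (p:ℚ) ^ (n + 1 - i) / ((n:ℚ) + 1) := by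
      rw [F, hlast]; ring
    have hbound : padicNorm p (bernoulli n * p) ≤ (p:ℚ)⁻¹ := by
      rw [key]
      apply pnorm_sub_le
      · exact sum_pow_range_p_norm (by omega)
      · apply padicNorm.sum_le' ?_ (by positivity)
        intro i hi
        have hi' : i < n := mem_range.1 hi
        have h1 : bernoulli i * ((n + 1).choose i) * (p:ℚ) ^ (n + 1 - i) / ((n:ℚ)+1)
            = (bernoulli i * ((n + 1).choose i) * (p:ℚ) ^ (n - i) / ((n:ℚ)+1)) * p := by
          have he : n + 1 - i = (n - i) + 1 := by omega
          rw [he, pow_succ]; ring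
        rw [h1]
        apply pnorm_mul_le ?_ (le_of_eq padicNorm.padicNorm_p_of_prime)
        have hd : ((n:ℚ)+1) = ((n+1:ℕ):ℚ) := by push_cast; ring
        rw [hd, pnorm_div_one (pnorm_nat_one
          (fun hdvd => absurd (Nat.le_of_dvd (by omega) hdvd) (by omega)))]
        apply pnorm_mul_le (pnorm_mul_le (ih i hi' (by omega)) (padicNorm.of_nat _))
        have hpow : ((p:ℚ)) ^ (n - i) = ((p^(n-i) : ℕ) : ℚ) := by push_cast; ring
        rw [hpow]
        exact padicNorm.of_nat _
    rw [padicNorm.mul, padicNorm.padicNorm_p_of_prime] at hbound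
    have hppos : (0:ℚ) < (p:ℚ)⁻¹ := by
      have := hp.1.pos
      positivity
    have h1 : padicNorm p (bernoulli n) * (p:ℚ)⁻¹ ≤ 1 * (p:ℚ)⁻¹ := by simpa using hbound
    exact le_of_mul_le_mul_right h1 hppos

lemma alt_sum_eq (m : ℕ) (hm : 1 ≤ m) (n : ℕ) :
    ∑ k ∈ Icc 1 (2*n), (-1:ℚ)^k * (k:ℚ)^m
      = 2^(m+1) * ∑ j ∈ range (n+1), (j:ℚ)^m - ∑ k ∈ range (2*n+1), (k:ℚ)^m := by
  induction n with
  | zero => simp [zero_pow (by omega : m ≠ 0)]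
  | succ n ih =>
    have e1 : 2*(n+1) = 2*n+1+1 := by ring
    rw [e1, Finset.sum_Icc_succ_top (by omega), Finset.sum_Icc_succ_top (by omega)]
    conv_rhs => rw [Finset.sum_range_succ _ (n+1), Finset.sum_range_succ _ (2*n+1+1),
      Finset.sum_range_succ _ (2*n+1)]
    rw [ih]
    have o1 : (-1:ℚ)^(2*n+1) = -1 := Odd.neg_one_pow ⟨n, by ring⟩
    have o2 : (-1:ℚ)^(2*n+1+1) = 1 := Even.neg_one_pow ⟨n+1, by ring⟩
    rw [o1, o2]
    have c1 : ((2*n+1+1 : ℕ) : ℚ) = 2*((n:ℚ)+1) := by push_cast; ring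
    have c2 : ((n+1 : ℕ) : ℚ) = (n:ℚ)+1 := by push_cast; ring
    have c3 : ((2*n+1 : ℕ):ℚ) = 2*(n:ℚ)+1 := by push_cast; ring
    rw [c1, c2, c3, mul_pow]
    ring

end Aux

theorem stmt_6 (a : ℕ) (ha : 1 < a) (p : ℕ) (hp : p.Prime) (hpa : a + 1 < p) :
    Rcong p 1 (H [-(a : ℤ)] (p - 1))
      (-((2 ^ a - 2) / (a * 2 ^ (a - 1))) * bernoulli (p - a)) := by
  haveI hfp : Fact p.Prime := ⟨hp⟩
  have hp4 : p ≠ 4 := by intro h; rw [h] at hp; norm_num at hp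
  have hp5 : 5 ≤ p := by omega
  obtain ⟨t, ht⟩ : Odd p := hp.odd_of_ne_two (by omega)
  set m := p - a - 1 with hmdef
  have hm1 : m + 1 = p - a := by omega
  have hma : m + a + 1 = p := by omega
  have hm0 : 1 ≤ m := by omega
  have hppos : (0:ℚ) < (p:ℚ)⁻¹ := by
    have := hp.pos
    positivity
  -- reduce the goal to a `padicNorm ≤ p⁻¹` statement
  rw [Rcong, show ((p:ℚ)) ^ (-((1:ℕ):ℤ)) = (p:ℚ)⁻¹ by simp]
  -- the three intermediate quantities
  set A : ℚ := ∑ k ∈ Icc 1 (p-1), (-1:ℚ)^k * (k:ℚ)^m with hA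
  set U : ℚ := (2 - 2^(m+2)) * bernoulli (m+1) / ((m:ℚ)+1) with hU
  have hS : H [-(a:ℤ)] (p-1) = ∑ k ∈ Icc 1 (p-1), (-1:ℚ)^k / (k:ℚ)^a := by
    have hs : Int.sign (-(a:ℤ)) = -1 := by
      rw [Int.sign_neg, Int.sign_natCast_of_ne_zero (by omega)]
    simp [H, Haux, hs]
  -- Step 1 : S ≡ A
  have step1 : padicNorm p (H [-(a:ℤ)] (p-1) - A) ≤ (p:ℚ)⁻¹ := by
    rw [hS, hA, ← Finset.sum_sub_distrib]
    apply padicNorm.sum_le' ?_ (le_of_lt hppos)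
    intro k hk
    obtain ⟨hk1, hk2⟩ := mem_Icc.1 hk
    have hknd : ¬ p ∣ k := fun hd => absurd (Nat.le_of_dvd (by omega) hd) (by omega)
    have hkQ : (k:ℚ) ≠ 0 := Nat.cast_ne_zero.2 (by omega)
    have hz : (p:ℤ) ∣ (1 - (k:ℤ)^(p-1)) := by
      have hk0 : (k : ZMod p) ≠ 0 := by
        rw [Ne, ZMod.natCast_eq_zero_iff]; exact hknd
      have hfer := ZMod.pow_card_sub_one_eq_one hk0
      rw [← ZMod.intCast_zmod_eq_zero_iff_dvd]
      push_cast
      rw [hfer]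
      ring
    have hEq : (-1:ℚ)^k / (k:ℚ)^a - (-1:ℚ)^k * (k:ℚ)^m
        = ((-1:ℚ)^k * ((1 - (k:ℤ)^(p-1) : ℤ) : ℚ)) / (k:ℚ)^a := by
      have hpow : (k:ℚ)^(p-1) = (k:ℚ)^m * (k:ℚ)^a := by
        rw [← pow_add]; congr 1; omega
      rw [div_sub' (pow_ne_zero a hkQ), div_eq_div_iff (pow_ne_zero a hkQ)
        (pow_ne_zero a hkQ)]
      push_cast
      rw [hpow]
      ring
    rw [hEq]
    have hden : padicNorm p ((k:ℚ)^a) = 1 := by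
      have : ((k:ℚ))^a = ((k^a : ℕ):ℚ) := by push_cast; ring
      rw [this]
      exact pnorm_nat_one (fun hd => hknd (hp.dvd_of_dvd_pow hd))
    rw [pnorm_div_one hden]
    exact pnorm_mul_le (pnorm_neg_one_pow k) (pnorm_dvd hz)
  -- the Bernoulli-sum form of U
  have hsum : ∑ i ∈ range (m+1), bernoulli i * (((m+1).choose i : ℕ) : ℚ) * (2:ℚ)^i
      = (2 - 2^(m+2)) * bernoulli (m+1) := by
    have h := sum_choose_two_pow_bernoulli (m+1)
    rw [Finset.sum_range_succ, Nat.choose_self] at h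
    have hc : ∑ i ∈ range (m+1), bernoulli i * (((m+1).choose i : ℕ) : ℚ) * 2^i
        = ∑ i ∈ range (m+1), (((m+1).choose i : ℕ) : ℚ) * 2^i * bernoulli i :=
      Finset.sum_congr rfl (fun i _ => by ring)
    rw [hc]
    push_cast at h
    linear_combination h
  have hUsum : U = ∑ i ∈ range (m+1),
      bernoulli i * (((m+1).choose i : ℕ) : ℚ) * (2:ℚ)^i / ((m:ℚ)+1) := by
    rw [hU, ← hsum, Finset.sum_div]
  -- Step 2 : A ≡ U
  have step2 : padicNorm p (A - U) ≤ (p:ℚ)⁻¹ := by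
    have hId : A = 2^(m+1) * (∑ j ∈ range (t+1), (j:ℚ)^m)
        - ∑ k ∈ range (2*t+1), (k:ℚ)^m := by
      rw [hA, show p - 1 = 2*t by omega]
      exact alt_sum_eq m hm0 t
    have F2 := _root_.sum_range_pow (t+1) m
    have F1 := _root_.sum_range_pow (2*t+1) m
    rw [hId, F2, F1, hUsum, Finset.mul_sum, ← Finset.sum_sub_distrib, ← Finset.sum_sub_distrib]
    apply padicNorm.sum_le' ?_ (le_of_lt hppos)
    intro i hi
    have hi' : i ≤ m := by have := mem_range.1 hi; omega
    have he1 : 1 ≤ m + 1 - i := by omega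
    have hm1Q : ((m:ℚ) + 1) ≠ 0 := by positivity
    have hpt : (p:ℚ) = 2*(t:ℚ)+1 := by exact_mod_cast congrArg (Nat.cast : ℕ → ℚ) ht
    have hterm : 2^(m+1) * (bernoulli i * (((m + 1).choose i : ℕ):ℚ)
          * ((t+1:ℕ):ℚ) ^ (m + 1 - i) / ((m:ℚ) + 1))
        - bernoulli i * (((m + 1).choose i : ℕ):ℚ) * ((2*t+1:ℕ):ℚ) ^ (m + 1 - i) / ((m:ℚ) + 1)
        - bernoulli i * (((m+1).choose i : ℕ) : ℚ) * (2:ℚ)^i / ((m:ℚ)+1)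
        = (bernoulli i * (((m + 1).choose i : ℕ):ℚ) / ((m:ℚ)+1))
          * ((2:ℚ)^i * ((((2*t+1:ℕ):ℚ)+1) ^ (m+1-i) - 1) - ((2*t+1:ℕ):ℚ) ^ (m+1-i)) := by
      have h2 : (2:ℚ)^(m+1) = 2^i * 2^(m+1-i) := by rw [← pow_add]; congr 1; omega
      have c1 : ((t+1:ℕ):ℚ) = (t:ℚ)+1 := by push_cast; ring
      have c2 : ((2*t+1:ℕ):ℚ) = 2*(t:ℚ)+1 := by push_cast; ring
      have h3 : ((2*(t:ℚ)+1)+1)^(m+1-i) = 2^(m+1-i) * ((t:ℚ)+1)^(m+1-i) := by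
        rw [← mul_pow]; congr 1; ring
      rw [c1, c2, h3, h2]
      field_simp
      ring
    rw [hterm]
    apply pnorm_mul_le
    · -- `B_i * choose / (m+1)` has norm ≤ 1
      have hd : ((m:ℚ)+1) = ((m+1:ℕ):ℚ) := by push_cast; ring
      rw [hd, pnorm_div_one (pnorm_nat_one
        (fun hdvd => absurd (Nat.le_of_dvd (by omega) hdvd) (by omega)))]
      exact pnorm_mul_le (bernoulli_pnorm_le i (by omega)) (padicNorm.of_nat _)
    · apply pnorm_sub_le
      · apply pnorm_mul_le
        · have : ((2:ℚ))^i = ((2^i : ℕ):ℚ) := by push_cast; ring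
          rw [this]; exact padicNorm.of_nat _
        · have hz2 : (p:ℤ) ∣ (((2*t+1:ℕ):ℤ)+1) ^ (m+1-i) - 1 := by
            rw [← ZMod.intCast_zmod_eq_zero_iff_dvd]
            push_cast
            rw [show ((2*(t:ZMod p)+1)+1 : ZMod p) = ((p : ZMod p)) + 1 by
              rw [show ((p:ℕ) : ZMod p) = ((2*t+1 : ℕ) : ZMod p) by rw [← ht]]; push_cast; ring]
            simp
          have hc : (((2*t+1:ℕ):ℚ)+1) ^ (m+1-i) - 1
              = (((((2*t+1:ℕ):ℤ)+1) ^ (m+1-i) - 1 : ℤ) : ℚ) := by push_cast; ring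
          rw [hc]
          exact pnorm_dvd hz2
      · have hc : ((2*t+1:ℕ):ℚ) ^ (m+1-i) = ((((2*t+1:ℕ):ℤ)) ^ (m+1-i) : ℤ) := by
          push_cast; ring
        rw [hc]
        apply pnorm_dvd
        have : ((2*t+1:ℕ):ℤ) = (p:ℤ) := by exact_mod_cast congrArg (Nat.cast : ℕ → ℤ) ht.symm
        rw [this]
        exact dvd_pow_self _ (by omega)
  -- Step 3 : U ≡ target
  have step3 : padicNorm p (U - -((2 ^ a - 2) / ((a:ℚ) * 2 ^ (a - 1))) * bernoulli (p - a))
      ≤ (p:ℚ)⁻¹ := by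
    rw [show p - a = m + 1 by omega]
    have ha2 : ((a:ℚ)) ≠ 0 := Nat.cast_ne_zero.2 (by omega)
    have h2a : ((2:ℚ))^(a-1) ≠ 0 := by positivity
    have hm1Q : ((m:ℚ) + 1) ≠ 0 := by positivity
    have hfac : U - -((2 ^ a - 2) / ((a:ℚ) * 2 ^ (a - 1))) * bernoulli (m+1)
        = bernoulli (m+1) *
          ((2 - 2^(m+2))/((m:ℚ)+1) + (2^a - 2)/((a:ℚ) * 2^(a-1))) := by
      rw [hU]; field_simp; ring
    rw [hfac]
    apply pnorm_mul_le (bernoulli_pnorm_le (m+1) (by omega))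
    set z : ℤ := (2 - 2^(m+2)) * ((a:ℤ) * 2^(a-1)) + ((m:ℤ)+1) * (2^a - 2) with hz
    set d : ℕ := (m+1) * (a * 2^(a-1)) with hd
    have hscalar : (2 - 2^(m+2))/((m:ℚ)+1) + (2^a - 2)/((a:ℚ) * 2^(a-1))
        = ((z : ℤ):ℚ) / ((d:ℕ):ℚ) := by
      rw [hz, hd]
      push_cast
      field_simp
    have hdnd : ¬ p ∣ d := by
      rw [hd]
      intro hdvd
      rcases (Nat.Prime.dvd_mul hp).1 hdvd with h1 | h1
      · exact absurd (Nat.le_of_dvd (by omega) h1) (by omega)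
      · rcases (Nat.Prime.dvd_mul hp).1 h1 with h2 | h2
        · exact absurd (Nat.le_of_dvd (by omega) h2) (by omega)
        · have := hp.dvd_of_dvd_pow h2
          have := Nat.le_of_dvd (by omega) this
          omega
    have hzdvd : (p:ℤ) ∣ z := by
      rw [← ZMod.intCast_zmod_eq_zero_iff_dvd, hz]
      push_cast
      have hm1c : ((m:ZMod p)+1) = -(a : ZMod p) := by
        have hc : ((m + 1 + a : ℕ) : ZMod p) = ((p:ℕ) : ZMod p) := by rw [show m+1+a = p by omega]
        rw [ZMod.natCast_self] at hc
        push_cast at hc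
        linear_combination hc
      have hP : (2:ZMod p)^(m+2) * 2^(a-1) = 2 := by
        rw [← pow_add, show m+2+(a-1) = p by omega, ZMod.pow_card]
      have h2a' : (2:ZMod p) * 2^(a-1) = 2^a := by
        rw [← pow_succ', show a-1+1 = a by omega]
      linear_combination ((2:ZMod p)^a - 2) * hm1c + (a:ZMod p) * h2a' - (a:ZMod p) * hP
    rw [hscalar, pnorm_div_one (pnorm_nat_one hdnd)]
    exact pnorm_dvd hzdvd
  exact pnorm_trans step1 (pnorm_trans step2 step3)
end

section
/- For any prime p > 3, the congruence H(−1, 1, −1; p−1) ≡ 0 (mod p) holds. -/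
open Finset

lemma sum_Icc_ite {M : Type*} [AddCommMonoid M] (n a : ℕ) (ha : 1 ≤ a) (X : ℕ → M) :
    ∑ k ∈ Icc (a+1) n, X k = ∑ k ∈ Icc 1 n, if a < k then X k else 0 := by
  rw [← Finset.sum_filter]
  apply Finset.sum_congr _ (fun _ _ => rfl)
  ext k
  simp only [mem_filter, mem_Icc]
  omega

lemma flatten (n : ℕ) (f g h : ℕ → ℚ) :
    (∑ k1 ∈ Icc 1 n, f k1 * ∑ k2 ∈ Icc (k1+1) n, g k2 * ∑ k3 ∈ Icc (k2+1) n, h k3)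
      = ∑ t ∈ ((Icc 1 n ×ˢ Icc 1 n ×ˢ Icc 1 n).filter
          fun t => t.1 < t.2.1 ∧ t.2.1 < t.2.2), f t.1 * (g t.2.1 * h t.2.2) := by
  rw [Finset.sum_filter, Finset.sum_product]
  simp only [Finset.sum_product]
  apply Finset.sum_congr rfl
  intro k1 hk1
  rw [sum_Icc_ite n k1 (mem_Icc.mp hk1).1, Finset.mul_sum]
  apply Finset.sum_congr rfl
  intro k2 hk2
  by_cases h12 : k1 < k2
  · simp only [h12, if_true, true_and]
    rw [sum_Icc_ite n k2 (mem_Icc.mp hk2).1, Finset.mul_sum, Finset.mul_sum]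
    apply Finset.sum_congr rfl
    intro k3 hk3
    by_cases h23 : k2 < k3 <;> simp [h23]
  · simp [h12]

lemma neg_one_pow_sub {R : Type*} [CommRing R] {p k : ℕ} (hk : k ≤ p) (hpodd : Odd p) :
    (-1 : R) ^ (p - k) = -(-1) ^ k := by
  have h1 : (-1 : R) ^ (p - k) * (-1) ^ k = (-1) ^ p := by
    rw [← pow_add, Nat.sub_add_cancel hk]
  have h2 : (-1 : R) ^ k * (-1) ^ k = 1 := by
    rw [← pow_add, ← two_mul, pow_mul, neg_one_sq, one_pow]
  calc (-1 : R) ^ (p - k) = (-1) ^ (p - k) * ((-1) ^ k * (-1) ^ k) := by rw [h2, mul_one]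
    _ = ((-1) ^ (p - k) * (-1) ^ k) * (-1) ^ k := by ring
    _ = (-1) ^ p * (-1) ^ k := by rw [h1]
    _ = -(-1) ^ k := by rw [hpodd.neg_one_pow, neg_one_mul]

theorem stmt_11 (p : ℕ) (hp : p.Prime) (hp3 : 3 < p) :
    Rcong p 1 (H [-1, 1, -1] (p - 1)) 0 := by
  haveI : Fact p.Prime := ⟨hp⟩
  have hpodd : Odd p := hp.odd_of_ne_two (by omega)
  have hpmod : p % 2 = 1 := Nat.odd_iff.mp hpodd
  set n := p - 1 with hn
  set S : Finset (ℕ × ℕ × ℕ) :=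
    (Icc 1 n ×ˢ Icc 1 n ×ˢ Icc 1 n).filter (fun t => t.1 < t.2.1 ∧ t.2.1 < t.2.2) with hS
  have memS : ∀ a b c : ℕ, (a, b, c) ∈ S ↔
      (1 ≤ a ∧ a ≤ n) ∧ (1 ≤ b ∧ b ≤ n) ∧ (1 ≤ c ∧ c ≤ n) ∧ a < b ∧ b < c := by
    intro a b c
    simp only [hS, mem_filter, mem_product, mem_Icc]
    tauto
  set c : ℕ × ℕ × ℕ → ℤ := fun t =>
    (-1) ^ (t.1 + t.2.2) *
      ((Nat.factorial n / t.1) * ((Nat.factorial n / t.2.1) * (Nat.factorial n / t.2.2)) : ℕ)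
    with hc
  set M : ℤ := ∑ t ∈ S, c t with hM
  set N : ℤ := (Nat.factorial n : ℤ) ^ 3 with hN
  have hNnd : ¬ (p : ℤ) ∣ N := by
    rw [hN]
    intro hdvd
    have h1 : (p : ℤ) ∣ (Nat.factorial n : ℤ) := Int.Prime.dvd_pow' (by exact_mod_cast hp) hdvd
    rw [Int.natCast_dvd_natCast] at h1
    have := (Nat.Prime.dvd_factorial hp).mp h1
    omega
  have hNQ : (N : ℚ) ≠ 0 := by
    rw [hN]
    push_cast
    positivity
  -- Step A : H = ∑ over S of F
  have key : H [-1, 1, -1] n =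
      ∑ t ∈ S, ((-1 : ℚ) ^ t.1 / t.1) * ((1 / (t.2.1 : ℚ)) * ((-1 : ℚ) ^ t.2.2 / t.2.2)) := by
    have h0 : H [-1,1,-1] n =
        ∑ k1 ∈ Icc 1 n, ((-1:ℚ)^k1 / k1) *
          ∑ k2 ∈ Icc (k1+1) n, (1 / (k2:ℚ)) *
            ∑ k3 ∈ Icc (k2+1) n, ((-1:ℚ)^k3 / k3) := by
      simp [H, Haux]
    rw [h0, hS, flatten n (fun k => (-1:ℚ)^k / k) (fun k => 1 / (k:ℚ)) (fun k => (-1:ℚ)^k / k)]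
  -- termwise cast identity
  have hterm : ∀ t ∈ S, (c t : ℚ) =
      (N : ℚ) * (((-1 : ℚ) ^ t.1 / t.1) * ((1 / (t.2.1 : ℚ)) * ((-1 : ℚ) ^ t.2.2 / t.2.2))) := by
    rintro ⟨k1, k2, k3⟩ ht
    obtain ⟨⟨h11, h12⟩, ⟨h21, h22⟩, ⟨h31, h32⟩, -, -⟩ := (memS k1 k2 k3).mp ht
    have cast_div : ∀ k : ℕ, 1 ≤ k → k ≤ n →
        ((Nat.factorial n / k : ℕ) : ℚ) = (Nat.factorial n : ℚ) / k := by
      intro k hk1 hk2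
      have hkq : (k : ℚ) ≠ 0 := Nat.cast_ne_zero.mpr (by omega)
      rw [Nat.cast_div (Nat.dvd_factorial hk1 hk2) hkq]
    have hk1 : ((k1:ℚ)) ≠ 0 := Nat.cast_ne_zero.mpr (by omega)
    have hk2 : ((k2:ℚ)) ≠ 0 := Nat.cast_ne_zero.mpr (by omega)
    have hk3 : ((k3:ℚ)) ≠ 0 := Nat.cast_ne_zero.mpr (by omega)
    have hfq : (Nat.factorial n : ℚ) ≠ 0 := Nat.cast_ne_zero.mpr (Nat.factorial_ne_zero n)
    have step : (c (k1, k2, k3) : ℚ) = (-1) ^ (k1 + k3) *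
        (((Nat.factorial n / k1 : ℕ) : ℚ) *
          (((Nat.factorial n / k2 : ℕ) : ℚ) * ((Nat.factorial n / k3 : ℕ) : ℚ))) := by
      simp only [hc]
      rw [Int.cast_mul, Int.cast_pow, Int.cast_neg, Int.cast_one, Int.cast_natCast,
        Nat.cast_mul, Nat.cast_mul]
    rw [step, cast_div k1 h11 h12, cast_div k2 h21 h22, cast_div k3 h31 h32, hN]
    push_cast
    field_simp
    ring
  -- H = M / N
  have hMQ : (M : ℚ) = ∑ t ∈ S, (c t : ℚ) := by
    rw [hM, Int.cast_sum]
  have hH : H [-1, 1, -1] n = (M : ℚ) / (N : ℚ) := by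
    rw [key, eq_div_iff hNQ, Finset.sum_mul, hMQ]
    apply Finset.sum_congr rfl
    intro t ht
    rw [hterm t ht]
    ring
  -- ZMod p computation
  have hMz : ((M : ℤ) : ZMod p) = 0 := by
    have hinv : ∀ k : ℕ, 1 ≤ k → k ≤ n →
        ((Nat.factorial n / k : ℕ) : ZMod p) = (Nat.factorial n : ZMod p) * (k : ZMod p)⁻¹ := by
      intro k hk1 hk2
      have hkz : (k : ZMod p) ≠ 0 := by
        rw [Ne, ZMod.natCast_eq_zero_iff]
        intro hdvd
        have := Nat.le_of_dvd (by omega) hdvd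
        omega
      have hmul : ((Nat.factorial n / k : ℕ) : ZMod p) * (k : ZMod p) = (Nat.factorial n : ZMod p) := by
        rw [← Nat.cast_mul, Nat.div_mul_cancel (Nat.dvd_factorial hk1 hk2)]
      field_simp at hmul ⊢
      linear_combination hmul
    set g : ℕ × ℕ × ℕ → ZMod p := fun t =>
      (-1) ^ (t.1 + t.2.2) * ((t.1 : ZMod p)⁻¹ * ((t.2.1 : ZMod p)⁻¹ * (t.2.2 : ZMod p)⁻¹)) with hg
    have hsum : ((M : ℤ) : ZMod p) = (Nat.factorial n : ZMod p) ^ 3 * ∑ t ∈ S, g t := by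
      rw [hM, Int.cast_sum, Finset.mul_sum]
      apply Finset.sum_congr rfl
      rintro ⟨k1, k2, k3⟩ ht
      obtain ⟨⟨h11, h12⟩, ⟨h21, h22⟩, ⟨h31, h32⟩, -, -⟩ := (memS k1 k2 k3).mp ht
      have step : ((c (k1, k2, k3) : ℤ) : ZMod p) = (-1) ^ (k1 + k3) *
          (((Nat.factorial n / k1 : ℕ) : ZMod p) *
            (((Nat.factorial n / k2 : ℕ) : ZMod p) * ((Nat.factorial n / k3 : ℕ) : ZMod p))) := by
        simp only [hc]
        rw [Int.cast_mul, Int.cast_pow, Int.cast_neg, Int.cast_one, Int.cast_natCast,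
          Nat.cast_mul, Nat.cast_mul]
      rw [step, hinv k1 h11 h12, hinv k2 h21 h22, hinv k3 h31 h32]
      simp only [hg]
      ring
    have hT : ∑ t ∈ S, g t = 0 := by
      apply Finset.sum_involution (fun t _ => (p - t.2.2, p - t.2.1, p - t.1))
      · rintro ⟨k1, k2, k3⟩ ht
        obtain ⟨⟨h11, h12⟩, ⟨h21, h22⟩, ⟨h31, h32⟩, -, -⟩ := (memS k1 k2 k3).mp ht
        have cast_sub : ∀ k : ℕ, k ≤ p → ((p - k : ℕ) : ZMod p) = -(k : ZMod p) := by
          intro k hk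
          rw [Nat.cast_sub hk, ZMod.natCast_self, zero_sub]
        show g (k1, k2, k3) + g (p - k3, p - k2, p - k1) = 0
        simp only [hg]
        rw [pow_add, pow_add, neg_one_pow_sub (by omega) hpodd, neg_one_pow_sub (by omega) hpodd,
          cast_sub k3 (by omega), cast_sub k2 (by omega), cast_sub k1 (by omega),
          inv_neg, inv_neg, inv_neg]
        ring
      · rintro ⟨k1, k2, k3⟩ ht -
        obtain ⟨⟨h11, h12⟩, ⟨h21, h22⟩, ⟨h31, h32⟩, -, -⟩ := (memS k1 k2 k3).mp ht
        intro heq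
        have heq' : (p - k3, p - k2, p - k1) = (k1, k2, k3) := heq
        simp only [Prod.mk.injEq] at heq'
        omega
      · rintro ⟨k1, k2, k3⟩ ht
        show (p - k3, p - k2, p - k1) ∈ S
        rw [memS]
        obtain ⟨⟨h11, h12⟩, ⟨h21, h22⟩, ⟨h31, h32⟩, hlt1, hlt2⟩ := (memS k1 k2 k3).mp ht
        refine ⟨⟨by omega, by omega⟩, ⟨by omega, by omega⟩, ⟨by omega, by omega⟩, by omega, by omega⟩
      · rintro ⟨k1, k2, k3⟩ ht
        obtain ⟨⟨h11, h12⟩, ⟨h21, h22⟩, ⟨h31, h32⟩, -, -⟩ := (memS k1 k2 k3).mp ht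
        show (p - (p - k1), p - (p - k2), p - (p - k3)) = (k1, k2, k3)
        simp only [Prod.mk.injEq]
        refine ⟨by omega, by omega, by omega⟩
    rw [hsum, hT, mul_zero]
  have hpM : (p : ℤ) ∣ M := (ZMod.intCast_zmod_eq_zero_iff_dvd M p).mp hMz
  -- conclude
  show padicNorm p (H [-1, 1, -1] n - 0) ≤ (p : ℚ) ^ (-((1:ℕ) : ℤ))
  rw [sub_zero, hH, padicNorm.div]
  rw [show padicNorm p (N : ℚ) = 1 from (padicNorm.int_eq_one_iff N).mpr hNnd, div_one]
  have := (padicNorm.dvd_iff_norm_le (p := p) (n := 1) (z := M)).mp (by simpa using hpM)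
  simpa using this
end

section
/- Let n ≥ d > 0 be integers. Then the polynomial identity d · Σ_{k=1}^{n} C(2k, k+d) · x^{n−k}/k = Σ_{k=0}^{n−d} C(2n, n+d+k) · v_k − C(2n, n+d) holds in ℚ[x], where the polynomials v_k ∈ ℤ[x] are defined by v_0 = 2, v_1 = x − 2, and v_{k+1} = (x − 2)·v_k − v_{k−1} for k ≥ 1. -/
open Finset Polynomial

/-- The polynomials `v₀ = 2`, `v₁ = x - 2`, `v_{k+2} = (x - 2)·v_{k+1} - v_k` in `ℤ[x]`. -/
noncomputable def v : ℕ → Polynomial ℤ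
  | 0 => 2
  | 1 => X - 2
  | (k + 2) => (X - 2) * v (k + 1) - v k

noncomputable def w (k : ℕ) : Polynomial ℚ := (v k).map (Int.castRingHom ℚ)

lemma w_zero : w 0 = 2 := by simp [w, v]
lemma w_one : w 1 = X - 2 := by simp [w, v]
lemma w_rec (k : ℕ) : w (k+2) = (X - 2) * w (k+1) - w k := by
  simp [w, v, Polynomial.map_sub, Polynomial.map_mul]

lemma X_mul_w_succ (k : ℕ) : X * w (k+1) = w (k+2) + w k + 2 * w (k+1) := by
  rw [w_rec]; ring

lemma X_mul_w_zero : X * w 0 = 2 * w 1 + 2 * w 0 := by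
  rw [w_zero, w_one]; ring

lemma key (a b : ℕ → ℚ) (e : ℚ) (m : ℕ)
    (hb : ∀ j, b (j+1) = a j + 2*a (j+1) + a (j+2))
    (ha : ∀ j, m < j → a j = 0)
    (he : e = b 0 - 2*a 0 - 2*a 1) :
    (∑ j ∈ range (m+2), C (b j) * w j) - C (b 0)
      = X * ((∑ j ∈ range (m+1), C (a j) * w j) - C (a 0)) + C e := by
  have hA : (∑ j ∈ range (m+1), C (a j) * w j) = ∑ j ∈ range (m+3), C (a j) * w j := by
    apply Finset.sum_subset (Finset.range_subset_range.2 (by omega))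
    intro j hj hj'
    rw [ha j (by simp only [Finset.mem_range] at hj'; omega)]
    simp
  have hB : (∑ j ∈ range (m+2), C (b j) * w j) = ∑ j ∈ range (m+3), C (b j) * w j := by
    apply Finset.sum_subset (Finset.range_subset_range.2 (by omega))
    intro j hj hj'
    simp only [Finset.mem_range, not_lt] at hj'
    obtain ⟨i, rfl⟩ : ∃ i, j = i + 1 := ⟨j - 1, by omega⟩
    rw [hb, ha _ (by omega), ha _ (by omega), ha _ (by omega)]
    simp
  rw [hA, hB]
  have hL : ∑ j ∈ range (m+3), C (b j) * w j
      = C (b 0) * w 0 + ∑ j ∈ range (m+2), C (b (j+1)) * w (j+1) := by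
    rw [Finset.sum_range_succ' (fun j => C (b j) * w j) (m+2)]; ring
  have hL2 : ∑ j ∈ range (m+2), C (b (j+1)) * w (j+1)
      = (∑ j ∈ range (m+2), C (a j) * w (j+1))
        + 2 * (∑ j ∈ range (m+2), C (a (j+1)) * w (j+1))
        + ∑ j ∈ range (m+2), C (a (j+2)) * w (j+1) := by
    rw [Finset.mul_sum, ← Finset.sum_add_distrib, ← Finset.sum_add_distrib]
    refine Finset.sum_congr rfl fun j _ => ?_
    rw [hb]
    simp only [map_add, map_mul, map_ofNat]
    ring
  have hR : X * (∑ j ∈ range (m+3), C (a j) * w j)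
      = C (a 0) * (2 * w 1 + 2 * w 0)
        + ((∑ j ∈ range (m+2), C (a (j+1)) * w (j+2))
          + (∑ j ∈ range (m+2), C (a (j+1)) * w j)
          + 2 * (∑ j ∈ range (m+2), C (a (j+1)) * w (j+1))) := by
    have h1 : ∑ j ∈ range (m+2), X * (C (a (j+1)) * w (j+1))
        = (∑ j ∈ range (m+2), C (a (j+1)) * w (j+2))
          + (∑ j ∈ range (m+2), C (a (j+1)) * w j)
          + 2 * (∑ j ∈ range (m+2), C (a (j+1)) * w (j+1)) := by
      rw [Finset.mul_sum, ← Finset.sum_add_distrib, ← Finset.sum_add_distrib]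
      refine Finset.sum_congr rfl fun j _ => ?_
      rw [show X * (C (a (j+1)) * w (j+1)) = C (a (j+1)) * (X * w (j+1)) by ring, X_mul_w_succ]
      ring
    have h0 : X * (C (a 0) * w 0) = C (a 0) * (2 * w 1 + 2 * w 0) := by
      rw [show X * (C (a 0) * w 0) = C (a 0) * (X * w 0) by ring, X_mul_w_zero]
    rw [Finset.mul_sum, Finset.sum_range_succ' (fun j => X * (C (a j) * w j)) (m+2), h1, h0]
    ring
  have hT1 : ∑ j ∈ range (m+2), C (a j) * w (j+1)
      = C (a 0) * w 1 + ∑ j ∈ range (m+1), C (a (j+1)) * w (j+2) := by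
    rw [Finset.sum_range_succ' (fun j => C (a j) * w (j+1)) (m+1)]; ring
  have hS1 : ∑ j ∈ range (m+2), C (a (j+1)) * w (j+2)
      = ∑ j ∈ range (m+1), C (a (j+1)) * w (j+2) := by
    rw [Finset.sum_range_succ, ha (m+2) (by omega)]; simp
  have hS2 : ∑ j ∈ range (m+2), C (a (j+1)) * w j
      = C (a 1) * w 0 + ∑ j ∈ range (m+1), C (a (j+2)) * w (j+1) := by
    rw [Finset.sum_range_succ' (fun j => C (a (j+1)) * w j) (m+1)]; ring
  have hT2 : ∑ j ∈ range (m+2), C (a (j+2)) * w (j+1)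
      = ∑ j ∈ range (m+1), C (a (j+2)) * w (j+1) := by
    rw [Finset.sum_range_succ, ha (m+3) (by omega)]; simp
  have hw : C (b 0) * w 0 + C (a 0) * w 1 - C (a 1) * w 0 - C (b 0)
      = 2 * C (a 0) * w 1 + 2 * C (a 0) * w 0 - C (a 0) * X + C e := by
    rw [w_zero, w_one, he]
    simp only [map_sub, map_add, map_mul, map_ofNat]
    ring
  linear_combination hL + hL2 + hT1 + hT2 - hR - hS1 - hS2 + hw

lemma choose_pascal2 (N s : ℕ) :
    (N+2).choose (s+2) = N.choose s + 2 * N.choose (s+1) + N.choose (s+2) := by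
  rw [Nat.choose_succ_succ (N+1) (s+1), Nat.choose_succ_succ N s, Nat.choose_succ_succ N (s+1)]
  ring

lemma he_lemma (n d : ℕ) (hd : 0 < d) (hdn : d ≤ n) :
    (d : ℚ) * (((2*(n+1)).choose (n+1+d) : ℚ) / (((n+1 : ℕ) : ℚ)))
      = ((2*(n+1)).choose (n+1+d) : ℚ) - 2*(((2*n).choose (n+d) : ℚ)) - 2*(((2*n).choose (n+d+1) : ℚ)) := by
  have hAB : (2*(n+1)).choose (n+1+d) = (2*n+1).choose (n+d) + (2*n+1).choose (n+d+1) := by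
    rw [show 2*(n+1) = (2*n+1)+1 by ring, show n+1+d = (n+d)+1 by ring, Nat.choose_succ_succ]
  have hB : (2*n+1).choose (n+d+1) = (2*n).choose (n+d) + (2*n).choose (n+d+1) :=
    Nat.choose_succ_succ _ _
  have h3 : (2*n+1).choose (n+d+1) * (n+d+1) = (2*n+1).choose (n+d) * (2*n+1 - (n+d)) :=
    Nat.choose_succ_right_eq _ _
  have h4 : 2*n+1 - (n+d) = (n+1) - d := by omega
  rw [h4] at h3
  have h3' : ((2*n+1).choose (n+d+1) : ℚ) * ((n:ℚ)+(d:ℚ)+1)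
      = ((2*n+1).choose (n+d) : ℚ) * ((n:ℚ)+1-(d:ℚ)) := by
    have := congrArg (fun x : ℕ => (x : ℚ)) h3
    push_cast [Nat.cast_sub (by omega : d ≤ n+1)] at this
    linarith [this]
  have hABq : ((2*(n+1)).choose (n+1+d) : ℚ)
      = ((2*n+1).choose (n+d) : ℚ) + ((2*n+1).choose (n+d+1) : ℚ) := by exact_mod_cast hAB
  have hBq : ((2*n+1).choose (n+d+1) : ℚ)
      = ((2*n).choose (n+d) : ℚ) + ((2*n).choose (n+d+1) : ℚ) := by exact_mod_cast hB
  have hn1 : (((n+1 : ℕ) : ℚ)) ≠ 0 := by positivity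
  rw [hABq]
  field_simp
  push_cast
  linear_combination h3' - 2*((n:ℚ)+1) * hBq

theorem stmt_16 (n d : ℕ) (hd : 0 < d) (hdn : d ≤ n) :
    (Polynomial.C (d : ℚ)) *
        ∑ k ∈ Finset.Icc 1 n,
          Polynomial.C ((Nat.choose (2 * k) (k + d) : ℚ) / k) * Polynomial.X ^ (n - k) =
      ∑ k ∈ Finset.range (n - d + 1),
          Polynomial.C (Nat.choose (2 * n) (n + d + k) : ℚ) * (v k).map (Int.castRingHom ℚ) -
        Polynomial.C (Nat.choose (2 * n) (n + d) : ℚ) := by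
  simp only [show ∀ k, (v k).map (Int.castRingHom ℚ) = w k from fun _ => rfl]
  induction n, hdn using Nat.le_induction with
  | base =>
    rw [show d - d + 1 = 1 from by omega, Finset.range_one, Finset.sum_singleton]
    rw [Finset.sum_eq_single_of_mem d (Finset.mem_Icc.2 ⟨hd, le_refl d⟩)]
    · rw [show d + d + 0 = 2 * d from by ring, show d + d = 2 * d from by ring,
        Nat.choose_self, Nat.sub_self, pow_zero, mul_one, ← C_mul, w_zero]
      push_cast
      rw [mul_one_div, div_self (by exact_mod_cast hd.ne' : (d:ℚ) ≠ 0)]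
      norm_num
    · intro k hk hkd
      simp only [Finset.mem_Icc] at hk
      rw [Nat.choose_eq_zero_of_lt (by omega : 2 * k < k + d)]
      simp
  | succ n hn ih =>
    have hrange : n + 1 - d + 1 = (n - d) + 2 := by omega
    rw [hrange]
    have key' := key (fun j => ((2*n).choose (n+d+j) : ℚ))
      (fun j => ((2*(n+1)).choose (n+1+d+j) : ℚ))
      ((d : ℚ) * (((2*(n+1)).choose (n+1+d) : ℚ) / (((n+1 : ℕ) : ℚ)))) (n - d)
      (fun j => by
        push_cast
        rw [show 2*(n+1) = 2*n+2 from by ring, show n+1+d+(j+1) = (n+d+j)+2 from by ring,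
          show n+d+(j+1) = (n+d+j)+1 from by ring, show n+d+(j+2) = (n+d+j)+2 from by ring,
          choose_pascal2]
        push_cast
        ring)
      (fun j hj => by
        show ((2*n).choose (n+d+j) : ℚ) = 0
        rw [Nat.choose_eq_zero_of_lt (by omega : 2*n < n+d+j)]
        simp)
      (by
        rw [he_lemma n d hd hn]
        norm_num)
    simp only [add_zero] at key'
    have hstep : (C (d:ℚ)) *
        ∑ k ∈ Finset.Icc 1 (n+1), C ((Nat.choose (2 * k) (k + d) : ℚ) / k) * X ^ (n + 1 - k)
        = X * ((C (d:ℚ)) * ∑ k ∈ Finset.Icc 1 n, C ((Nat.choose (2 * k) (k + d) : ℚ) / k) * X ^ (n - k))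
          + C ((d : ℚ) * (((2*(n+1)).choose (n+1+d) : ℚ) / (((n+1 : ℕ) : ℚ)))) := by
      rw [Finset.sum_Icc_succ_top (by omega : 1 ≤ n + 1)]
      have h2 : ∑ k ∈ Finset.Icc 1 n, C ((Nat.choose (2 * k) (k + d) : ℚ) / k) * X ^ (n + 1 - k)
          = X * ∑ k ∈ Finset.Icc 1 n, C ((Nat.choose (2 * k) (k + d) : ℚ) / k) * X ^ (n - k) := by
        rw [Finset.mul_sum]
        refine Finset.sum_congr rfl fun k hk => ?_
        simp only [Finset.mem_Icc] at hk
        rw [show n + 1 - k = (n - k) + 1 from by omega, pow_succ]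
        ring
      rw [h2, show n + 1 - (n + 1) = 0 from by omega, pow_zero, mul_one, mul_add, ← C_mul]
      ring
    rw [hstep, ih]
    exact key'.symm
end

section
/- For any integer n > 0, the identity 4^n · Σ_{k=1}^{n} (C(2k, k)/4^k) · (1/k) = −4·(−1)^n · Σ_{d=0}^{n−1} ((−1)^d/(n−d)) · Σ_{j=0}^{d−1} C(2n, j) − 2·(−1)^n · Σ_{d=0}^{n−1} ((−1)^d/(n−d)) · C(2n, d) holds in ℚ. (Here C(2k, k)/4^k = (−1)^k · C(−1/2, k), so the left-hand side equals 4^n · Σ_{k=1}^{n} ((−1)^k/k) · C(−1/2, k).) -/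
open Finset

private def Aq (n e : ℕ) : ℚ := (Nat.choose (2 * n) e : ℚ)

private def Tq (n d : ℕ) : ℚ := ∑ j ∈ Finset.range d, Aq n j

private def Vq (n d : ℕ) : ℚ := 2 * Tq n d + Aq n d

private def Dq (n : ℕ) : ℕ → ℚ
  | 0 => Aq n 1
  | (e+1) => Aq n (e+2) - Aq n e

private def Rq (n : ℕ) : ℚ :=
  -2 * (-1 : ℚ) ^ n * ∑ d ∈ Finset.range n, (-1 : ℚ) ^ d * Vq n d / ((n : ℚ) - d)

private lemma Aq_zero (n : ℕ) : Aq n 0 = 1 := by simp [Aq]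

private lemma Aq_one (n : ℕ) : Aq n 1 = 2 * n := by simp [Aq]

private lemma Aq_pascal2 (n j : ℕ) :
    Aq (n+1) (j+2) = Aq n (j+2) + 2 * Aq n (j+1) + Aq n j := by
  have h1 : (2*(n+1)).choose (j+2) = (2*n+1).choose (j+1) + (2*n+1).choose (j+2) := by
    have : 2*(n+1) = (2*n+1)+1 := by ring
    rw [this]; exact Nat.choose_succ_succ (2*n+1) (j+1)
  have h2 : (2*n+1).choose (j+1) = (2*n).choose j + (2*n).choose (j+1) :=
    Nat.choose_succ_succ (2*n) j
  have h3 : (2*n+1).choose (j+2) = (2*n).choose (j+1) + (2*n).choose (j+2) :=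
    Nat.choose_succ_succ (2*n) (j+1)
  simp only [Aq, h1, h2, h3]
  push_cast; ring

private lemma Aq_succ_one (n : ℕ) : Aq (n+1) 1 = Aq n 1 + 2 := by
  rw [Aq_one, Aq_one]; push_cast; ring

private lemma Tq_succ (n d : ℕ) : Tq n (d+1) = Tq n d + Aq n d := by
  simp [Tq, Finset.sum_range_succ]

private lemma Vq_succ (n d : ℕ) : Vq n (d+1) = Vq n d + Aq n d + Aq n (d+1) := by
  simp only [Vq, Tq_succ]; ring

private lemma Vq_zero (n : ℕ) : Vq n 0 = 1 := by
  simp [Vq, Tq, Aq]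

private lemma Vq_diff (n : ℕ) : ∀ e, Vq (n+1) (e+1) - 4 * Vq n e = Dq n e := by
  intro e
  induction e with
  | zero =>
    rw [Vq_succ, Vq_zero, Vq_zero, Aq_zero, Aq_succ_one]
    simp only [Dq]; ring
  | succ e ih =>
    rw [Vq_succ, Vq_succ n e]
    rcases e with _ | f
    · rw [Vq_succ, Vq_zero, Vq_zero, Aq_succ_one, Aq_pascal2]
      simp only [Dq, Aq_zero]; ring
    · have h1 := Aq_pascal2 n f
      have h2 := Aq_pascal2 n (f+1)
      simp only [Dq] at ih ⊢
      have e1 : f + 1 + 1 = f + 2 := rfl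
      have e2 : f + 1 + 2 = f + 3 := rfl
      rw [e1] at *
      linarith [h1, h2, ih]

private lemma L1q (n : ℕ) : ∀ e, e < n → ((n:ℚ)+1) * Dq n e = ((n:ℚ) - e) * Aq (n+1) (e+1) := by
  intro e he
  rcases e with _ | e
  · simp only [Dq, zero_add, Aq_succ_one, Aq_one]
    push_cast; ring
  · have hle1 : e + 2 ≤ 2*n := by omega
    have hle2 : e + 1 ≤ 2*n := by omega
    have h1 := Nat.choose_succ_right_eq (2*n) (e+1)
    have h2 := Nat.choose_succ_right_eq (2*n) e
    have q1 : ((2*n).choose (e+2) : ℚ) * (e+2) = ((2*n).choose (e+1) : ℚ) * (2*n - (e+1)) := by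
      have := congrArg (fun x : ℕ => (x : ℚ)) h1
      push_cast [Nat.cast_sub (show e + 1 ≤ 2*n by omega)] at this ⊢
      linear_combination this
    have q2 : ((2*n).choose (e+1) : ℚ) * (e+1) = ((2*n).choose e : ℚ) * (2*n - e) := by
      have := congrArg (fun x : ℕ => (x : ℚ)) h2
      push_cast [Nat.cast_sub (show e ≤ 2*n by omega)] at this ⊢
      linear_combination this
    simp only [Dq]
    rw [Aq_pascal2]
    simp only [Aq]
    push_cast
    linear_combination q1 + q2

private lemma ALTq (M : ℕ) : ∀ p, ∑ j ∈ Finset.range (p+1), (-1:ℚ)^j * ((M+1).choose j : ℚ)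
    = (-1:ℚ)^p * (M.choose p : ℚ) := by
  intro p
  induction p with
  | zero => simp
  | succ p ih =>
    rw [Finset.sum_range_succ, ih, Nat.choose_succ_succ M p]
    push_cast; ring

private lemma Rq_step (n : ℕ) :
    Rq (n+1) = 4 * Rq n + ((2*(n+1)).choose (n+1) : ℚ) / (n+1) := by
  have hn1 : ((n:ℚ)+1) ≠ 0 := by positivity
  have key : ∀ i ∈ Finset.range n,
      (-1:ℚ)^(i+1) * Vq (n+1) (i+1) / (((n:ℚ)+1) - ((i:ℚ)+1)) =
      -4 * ((-1:ℚ)^i * Vq n i / ((n:ℚ) - i)) - (-1:ℚ)^i * Aq (n+1) (i+1) / ((n:ℚ)+1) := by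
    intro i hi
    have hi' : i < n := Finset.mem_range.mp hi
    have hni : ((n:ℚ) - i) ≠ 0 := by
      have : (i:ℚ) < (n:ℚ) := by exact_mod_cast hi'
      linarith
    have hv := Vq_diff n i
    have hl := L1q n i hi'
    have hD : Dq n i / ((n:ℚ) - i) = Aq (n+1) (i+1) / ((n:ℚ)+1) := by
      rw [div_eq_div_iff hni hn1]
      linarith [hl]
    have : Vq (n+1) (i+1) = 4 * Vq n i + Dq n i := by linarith [hv]
    rw [this]
    have expand : (-1:ℚ)^(i+1) * (4 * Vq n i + Dq n i) / (((n:ℚ)+1) - ((i:ℚ)+1)) =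
        -4 * ((-1:ℚ)^i * Vq n i / ((n:ℚ) - i)) - (-1:ℚ)^i * (Dq n i / ((n:ℚ) - i)) := by
      rw [show ((n:ℚ)+1) - ((i:ℚ)+1) = (n:ℚ) - i by ring]
      ring
    rw [expand, hD]
    ring
  -- alternating sum evaluation
  have halt : ∑ j ∈ Finset.range (n+1), (-1:ℚ)^j * Aq (n+1) j
      = (-1:ℚ)^n * ((2*n+1).choose n : ℚ) := by
    have h := ALTq (2*n+1) n
    have e : 2*(n+1) = (2*n+1)+1 := by ring
    simp only [Aq, e]
    exact h
  have hsplit : ∑ j ∈ Finset.range (n+1), (-1:ℚ)^j * Aq (n+1) j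
      = (∑ i ∈ Finset.range n, (-1:ℚ)^(i+1) * Aq (n+1) (i+1)) + 1 := by
    rw [Finset.sum_range_succ']
    simp [Aq_zero]
  have hAsum : ∑ i ∈ Finset.range n, (-1:ℚ)^i * Aq (n+1) (i+1)
      = 1 - (-1:ℚ)^n * ((2*n+1).choose n : ℚ) := by
    have : ∑ i ∈ Finset.range n, (-1:ℚ)^(i+1) * Aq (n+1) (i+1)
        = (-1:ℚ)^n * ((2*n+1).choose n : ℚ) - 1 := by
      rw [← halt] at *
      linarith [hsplit]
    calc ∑ i ∈ Finset.range n, (-1:ℚ)^i * Aq (n+1) (i+1)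
        = -∑ i ∈ Finset.range n, (-1:ℚ)^(i+1) * Aq (n+1) (i+1) := by
          rw [← Finset.sum_neg_distrib]
          exact Finset.sum_congr rfl (fun i _ => by ring)
      _ = 1 - (-1:ℚ)^n * ((2*n+1).choose n : ℚ) := by rw [this]; ring
  have hchoose : ((2*(n+1)).choose (n+1) : ℚ) = 2 * ((2*n+1).choose n : ℚ) := by
    have e : 2*(n+1) = (2*n+1)+1 := by ring
    rw [e, Nat.choose_succ_succ (2*n+1) n]
    have : (2*n+1).choose (n+1) = (2*n+1).choose n := by
      rw [← Nat.choose_symm (by omega : n + 1 ≤ 2*n+1)]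
      congr 1
      omega
    rw [this]; push_cast; ring
  -- main computation
  unfold Rq
  rw [Finset.sum_range_succ']
  have f0 : (-1:ℚ)^0 * Vq (n+1) 0 / (((n+1:ℕ):ℚ) - ((0:ℕ):ℚ)) = 1/((n:ℚ)+1) := by
    rw [Vq_zero]; push_cast; ring
  have hcast : ∀ i : ℕ, (((n+1:ℕ)):ℚ) - ((i+1:ℕ):ℚ) = ((n:ℚ)+1) - ((i:ℚ)+1) := by
    intro i; push_cast; ring
  have hmain : ∑ i ∈ Finset.range n, (-1:ℚ)^(i+1) * Vq (n+1) (i+1) / (((n+1:ℕ):ℚ) - ((i+1:ℕ):ℚ))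
      = -4 * ∑ i ∈ Finset.range n, ((-1:ℚ)^i * Vq n i / ((n:ℚ) - i))
        - (1 - (-1:ℚ)^n * ((2*n+1).choose n : ℚ)) / ((n:ℚ)+1) := by
    have : ∑ i ∈ Finset.range n, (-1:ℚ)^(i+1) * Vq (n+1) (i+1) / (((n+1:ℕ):ℚ) - ((i+1:ℕ):ℚ))
        = ∑ i ∈ Finset.range n,
            (-4 * ((-1:ℚ)^i * Vq n i / ((n:ℚ) - i)) - (-1:ℚ)^i * Aq (n+1) (i+1) / ((n:ℚ)+1)) := by
      refine Finset.sum_congr rfl (fun i hi => ?_)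
      rw [hcast i]
      exact key i hi
    rw [this, Finset.sum_sub_distrib, ← Finset.mul_sum]
    have : ∑ i ∈ Finset.range n, (-1:ℚ)^i * Aq (n+1) (i+1) / ((n:ℚ)+1)
        = (1 - (-1:ℚ)^n * ((2*n+1).choose n : ℚ)) / ((n:ℚ)+1) := by
      rw [← hAsum, Finset.sum_div]
    rw [this]
  rw [hmain, f0, hchoose]
  push_cast
  simp only [pow_succ]
  rcases Nat.even_or_odd n with h | h
  · rw [h.neg_one_pow]; field_simp; ring
  · rw [h.neg_one_pow]; field_simp; ring

private lemma Rq_eq_L : ∀ n : ℕ,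
    (4 : ℚ) ^ n * ∑ k ∈ Finset.Icc 1 n, ((Nat.choose (2 * k) k : ℚ) / 4 ^ k) * (1 / k) = Rq n := by
  intro n
  induction n with
  | zero => simp [Rq]
  | succ n ih =>
    rw [Rq_step n]
    rw [Finset.sum_Icc_succ_top (by omega : 1 ≤ n+1), mul_add]
    have h4 : ((4:ℚ)^(n+1)) ≠ 0 := by positivity
    have hn1 : ((n+1:ℕ):ℚ) ≠ 0 := by positivity
    have step1 : (4:ℚ)^(n+1) * ∑ k ∈ Finset.Icc 1 n, ((Nat.choose (2 * k) k : ℚ) / 4 ^ k) * (1 / k)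
        = 4 * Rq n := by
      rw [← ih]; ring
    rw [step1]
    congr 1
    have hc : ((n+1:ℕ):ℚ) = (n:ℚ)+1 := by push_cast; ring
    rw [hc]
    field_simp

theorem stmt_17 (n : ℕ) (hn : 0 < n) :
    (4 : ℚ) ^ n * ∑ k ∈ Finset.Icc 1 n, ((Nat.choose (2 * k) k : ℚ) / 4 ^ k) * (1 / k) =
      -4 * (-1 : ℚ) ^ n * ∑ d ∈ Finset.range n,
          ((-1 : ℚ) ^ d / ((n : ℚ) - d)) * ∑ j ∈ Finset.range d, (Nat.choose (2 * n) j : ℚ) -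
        2 * (-1 : ℚ) ^ n * ∑ d ∈ Finset.range n,
          ((-1 : ℚ) ^ d / ((n : ℚ) - d)) * (Nat.choose (2 * n) d : ℚ) := by
  rw [Rq_eq_L n]
  unfold Rq
  have hsplit : ∑ d ∈ Finset.range n, (-1:ℚ)^d * Vq n d / ((n:ℚ) - d)
      = 2 * ∑ d ∈ Finset.range n, ((-1:ℚ)^d / ((n:ℚ) - d)) * Tq n d
        + ∑ d ∈ Finset.range n, ((-1:ℚ)^d / ((n:ℚ) - d)) * Aq n d := by
    rw [Finset.mul_sum, ← Finset.sum_add_distrib]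
    refine Finset.sum_congr rfl (fun d _ => ?_)
    simp only [Vq]
    ring
  rw [hsplit]
  simp only [Tq, Aq]
  ring
end

section
/- For any odd prime p and any integer j with 0 < j < p, the congruence C(2p, j) ≡ −2p·(−1)^j/j + 4p²·((−1)^j/j)·H(1; j−1) (mod p³) holds, where H(1; j−1) = Σ_{i=1}^{j−1} 1/i. -/
open Finset

section Aux

variable (p : ℕ) [hp : Fact p.Prime]

/-- padic norm of a small positive natural is 1. -/
lemma aux_norm_small {m : ℕ} (h0 : 0 < m) (h1 : m < p) : padicNorm p (m : ℚ) = 1 :=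
  (padicNorm.nat_eq_one_iff m).2 (Nat.not_dvd_of_pos_of_lt h0 h1)

/-- harmonic sum with indices < p has norm ≤ 1 -/
lemma aux_norm_H {m : ℕ} (h : m < p) :
    padicNorm p (∑ i ∈ Finset.Icc 1 m, (1 : ℚ) / i) ≤ 1 := by
  apply padicNorm.sum_le' _ zero_le_one
  intro i hi
  simp only [Finset.mem_Icc] at hi
  rw [padicNorm.div, padicNorm.one, aux_norm_small p hi.1 (lt_of_le_of_lt hi.2 h), div_one]

/-- Main induction: the product `∏_{i=1}^m (2p-i)/i` is congruent to
`(-1)^m (1 - 2p H(m))` mod p². -/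
lemma aux_prod_cong {m : ℕ} (h : m < p) :
    padicNorm p ((∏ i ∈ Finset.Icc 1 m, ((2 * (p : ℚ) - i) / i))
      - (-1 : ℚ) ^ m * (1 - 2 * p * ∑ i ∈ Finset.Icc 1 m, (1 : ℚ) / i))
      ≤ (p : ℚ) ^ (-(2 : ℤ)) := by
  have hp1 : 1 < p := hp.out.one_lt
  have hppos : (0 : ℚ) < p := by exact_mod_cast hp.out.pos
  have hpne : (p : ℚ) ≠ 0 := ne_of_gt hppos
  have hpow2 : ((p : ℚ))⁻¹ * ((p : ℚ))⁻¹ = (p : ℚ) ^ (-(2 : ℤ)) := by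
    rw [← zpow_neg_one, ← zpow_add₀ hpne]
    norm_num
  induction m with
  | zero =>
      simp [padicNorm.zero, le_of_lt (zpow_pos hppos _)]
  | succ m ih =>
      have hm : m < p := Nat.lt_of_succ_lt h
      have ih' := ih hm
      have hc : ((m : ℚ) + 1) ≠ 0 := by positivity
      set Pm : ℚ := ∏ i ∈ Finset.Icc 1 m, ((2 * (p : ℚ) - i) / i) with hPm
      set Hm : ℚ := ∑ i ∈ Finset.Icc 1 m, (1 : ℚ) / i with hHm
      rw [Finset.prod_Icc_succ_top (Nat.one_le_iff_ne_zero.2 (Nat.succ_ne_zero m)),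
        Finset.sum_Icc_succ_top (Nat.one_le_iff_ne_zero.2 (Nat.succ_ne_zero m))]
      have key : Pm * ((2 * (p : ℚ) - (m + 1)) / (m + 1))
          - (-1 : ℚ) ^ (m + 1) * (1 - 2 * p * (Hm + 1 / (m + 1)))
          = ((2 * (p : ℚ) - (m + 1)) / (m + 1))
              * (Pm - (-1 : ℚ) ^ m * (1 - 2 * p * Hm))
            + (p : ℚ) ^ 2 * (((-1 : ℚ) ^ (m + 1) * 4) * Hm / (m + 1)) := by
        rw [pow_succ]
        field_simp
        ring
      push_cast at key ⊢
      rw [key]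
      refine le_trans padicNorm.nonarchimedean ?_
      have hA : padicNorm p (((2 * (p : ℚ) - (m + 1)) / (m + 1))
          * (Pm - (-1 : ℚ) ^ m * (1 - 2 * p * Hm))) ≤ (p : ℚ) ^ (-(2 : ℤ)) := by
        rw [padicNorm.mul]
        have h1 : padicNorm p ((2 * (p : ℚ) - (m + 1)) / (m + 1)) ≤ 1 := by
          rw [padicNorm.div]
          have hnum : (2 * (p : ℚ) - (m + 1)) = ((2 * (p : ℤ) - (m + 1) : ℤ) : ℚ) := by
            push_cast; ring
          have hden : padicNorm p ((m : ℚ) + 1) = 1 := by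
            have := aux_norm_small p (Nat.succ_pos m) h
            push_cast at this
            exact this
          rw [hnum, hden, div_one]
          exact padicNorm.of_int _
        calc padicNorm p ((2 * (p : ℚ) - (m + 1)) / (m + 1))
              * padicNorm p (Pm - (-1 : ℚ) ^ m * (1 - 2 * p * Hm))
            ≤ 1 * ((p : ℚ) ^ (-(2 : ℤ))) := by
              exact mul_le_mul h1 ih' (padicNorm.nonneg _) zero_le_one
          _ = (p : ℚ) ^ (-(2 : ℤ)) := one_mul _
      have hB : padicNorm p ((p : ℚ) ^ 2 * (((-1 : ℚ) ^ (m + 1) * 4) * Hm / (m + 1)))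
          ≤ (p : ℚ) ^ (-(2 : ℤ)) := by
        rw [padicNorm.mul]
        have h1 : padicNorm p ((p : ℚ) ^ 2) = (p : ℚ) ^ (-(2 : ℤ)) := by
          rw [sq, padicNorm.mul, padicNorm.padicNorm_p hp1, hpow2]
        have h2 : padicNorm p ((((-1 : ℚ) ^ (m + 1) * 4) * Hm / (m + 1))) ≤ 1 := by
          rw [padicNorm.div, padicNorm.mul]
          have hint : padicNorm p ((-1 : ℚ) ^ (m + 1) * 4) ≤ 1 := by
            have : ((-1 : ℚ) ^ (m + 1) * 4) = (((-1 : ℤ) ^ (m + 1) * 4 : ℤ) : ℚ) := by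
              push_cast; ring
            rw [this]; exact padicNorm.of_int _
          have hden : padicNorm p ((m : ℚ) + 1) = 1 := by
            have := aux_norm_small p (Nat.succ_pos m) h
            push_cast at this
            exact this
          rw [hden, div_one]
          calc padicNorm p ((-1 : ℚ) ^ (m + 1) * 4) * padicNorm p Hm
              ≤ 1 * 1 := mul_le_mul hint (aux_norm_H p hm) (padicNorm.nonneg _) zero_le_one
            _ = 1 := one_mul 1
        calc padicNorm p ((p : ℚ) ^ 2)
              * padicNorm p ((((-1 : ℚ) ^ (m + 1) * 4) * Hm / (m + 1)))
            ≤ (p : ℚ) ^ (-(2 : ℤ)) * 1 := by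
              rw [h1]
              exact mul_le_mul_of_nonneg_left h2 (le_of_lt (zpow_pos hppos _))
          _ = (p : ℚ) ^ (-(2 : ℤ)) := mul_one _
      exact max_le hA hB

/-- product formula for binomial coefficients -/
lemma aux_choose_prod {m : ℕ} (h : m ≤ 2 * p - 1) :
    ((2 * p - 1).choose m : ℚ) = ∏ i ∈ Finset.Icc 1 m, ((2 * (p : ℚ) - i) / i) := by
  have hppos : 0 < p := hp.out.pos
  have h2p : 1 ≤ 2 * p := by omega
  induction m with
  | zero => simp
  | succ m ih =>
      have hm : m ≤ 2 * p - 1 := Nat.le_of_succ_le h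
      have ih' := ih hm
      have hrec := Nat.choose_succ_right_eq (2 * p - 1) m
      have hcast : (((2 * p - 1 - m : ℕ)) : ℚ) = 2 * (p : ℚ) - (m + 1) := by
        have h1 : m ≤ 2 * p - 1 := by omega
        push_cast [Nat.cast_sub h1, Nat.cast_sub h2p]
        ring
      have hQ : ((2 * p - 1).choose (m + 1) : ℚ) * (m + 1)
          = ((2 * p - 1).choose m : ℚ) * (2 * (p : ℚ) - (m + 1)) := by
        rw [← hcast]
        exact_mod_cast congrArg (fun n : ℕ => (n : ℚ)) hrec
      have hc : ((m : ℚ) + 1) ≠ 0 := by positivity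
      rw [Finset.prod_Icc_succ_top (Nat.one_le_iff_ne_zero.2 (Nat.succ_ne_zero m)), ← ih']
      push_cast at hQ ⊢
      field_simp
      linarith [hQ]

end Aux

theorem stmt_18 (p : ℕ) (hp : p.Prime) (hp2 : p ≠ 2) (j : ℕ) (hj0 : 0 < j) (hjp : j < p) :
    Rcong p 3 (Nat.choose (2 * p) j : ℚ)
      (-2 * p * ((-1 : ℚ) ^ j / j) +
        4 * p ^ 2 * ((-1 : ℚ) ^ j / j) * ∑ i ∈ Finset.Icc 1 (j - 1), (1 : ℚ) / i) := by
  haveI : Fact p.Prime := ⟨hp⟩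
  have hp1 : 1 < p := hp.one_lt
  have hppos : (0 : ℚ) < p := by exact_mod_cast hp.pos
  have hpne : (p : ℚ) ≠ 0 := ne_of_gt hppos
  obtain ⟨k, rfl⟩ : ∃ k, j = k + 1 := ⟨j - 1, by omega⟩
  have hk : k < p := by omega
  have hkc : ((k : ℚ) + 1) ≠ 0 := by positivity
  set Pk : ℚ := ∏ i ∈ Finset.Icc 1 k, ((2 * (p : ℚ) - i) / i) with hPk
  set Hk : ℚ := ∑ i ∈ Finset.Icc 1 k, (1 : ℚ) / i with hHk
  -- binomial identity: choose(2p, k+1) = (2p/(k+1)) * Pk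
  have hchoose : ((2 * p).choose (k + 1) : ℚ) = (2 * p / (k + 1)) * Pk := by
    have h1 : 2 * p * ((2 * p - 1).choose k) = (2 * p).choose (k + 1) * (k + 1) := by
      have := Nat.add_one_mul_choose_eq (2 * p - 1) k
      have h2 : 2 * p - 1 + 1 = 2 * p := by omega
      rwa [h2] at this
    have h3 : ((2 * p - 1).choose k : ℚ) = Pk := aux_choose_prod p (by omega)
    have h4 : (2 * (p : ℚ)) * Pk = ((2 * p).choose (k + 1) : ℚ) * (k + 1) := by
      rw [← h3]
      exact_mod_cast congrArg (fun n : ℕ => (n : ℚ)) h1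
    field_simp
    linarith [h4]
  have h2 := aux_prod_cong p hk
  rw [← hPk, ← hHk] at h2
  unfold Rcong
  have hdiff : (Nat.choose (2 * p) (k + 1) : ℚ) -
      (-2 * (p : ℚ) * ((-1 : ℚ) ^ (k + 1) / ((k + 1 : ℕ) : ℚ)) +
        4 * (p : ℚ) ^ 2 * ((-1 : ℚ) ^ (k + 1) / ((k + 1 : ℕ) : ℚ)) *
          ∑ i ∈ Finset.Icc 1 (k + 1 - 1), (1 : ℚ) / i)
      = (2 * (p : ℚ) / ((k + 1 : ℕ) : ℚ)) * (Pk - (-1 : ℚ) ^ k * (1 - 2 * p * Hk)) := by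
    have hs : k + 1 - 1 = k := rfl
    rw [hs, ← hHk, hchoose, pow_succ]
    push_cast
    field_simp
    ring
  rw [hdiff, padicNorm.mul]
  have h1 : padicNorm p (2 * (p : ℚ) / ((k + 1 : ℕ) : ℚ)) = (p : ℚ)⁻¹ := by
    rw [padicNorm.div, padicNorm.mul]
    have h2' : padicNorm p (2 : ℚ) = 1 := by
      have := aux_norm_small p (show 0 < 2 by norm_num) (by omega : 2 < p)
      push_cast at this; exact this
    have hden : padicNorm p (((k + 1 : ℕ)) : ℚ) = 1 :=
      aux_norm_small p (Nat.succ_pos k) (by omega : k + 1 < p)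
    rw [h2', hden, padicNorm.padicNorm_p hp1, one_mul, div_one]
  rw [h1]
  calc (p : ℚ)⁻¹ * padicNorm p (Pk - (-1 : ℚ) ^ k * (1 - 2 * (p : ℚ) * Hk))
      ≤ (p : ℚ)⁻¹ * ((p : ℚ) ^ (-(2 : ℤ))) :=
        mul_le_mul_of_nonneg_left h2 (le_of_lt (inv_pos.2 hppos))
    _ = (p : ℚ) ^ (-((3 : ℕ) : ℤ)) := by
        rw [← zpow_neg_one, ← zpow_add₀ hpne]
        norm_num
end
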